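/- arXiv:math/0605222 — 8 statements merged into one kernel-verified Lean document; each statement's English description precedes it below -/
import Mathlib

section
/- For any full-rank lattice Γ in ℝ^d, the set OC(Γ) = {R ∈ O(d) : Γ and RΓ are commensurate} is a subgroup of O(d). -/
/-- The standard hypercubic lattice `ℤ^d` inside `ℝ^d`. -/
def Zd (d : ℕ) : AddSubgroup (Fin d → ℝ) :=
  AddSubgroup.pi Set.univ fun _ => AddSubgroup.zmultiples (1 : ℝ)

/-- The dual lattice `Γ* = {x | ⟨x,y⟩ ∈ ℤ for all y ∈ Γ}`. -/
def dualLattice {d : ℕ} (Γ : AddSubgroup (Fin d → ℝ)) : AddSubgroup (Fin d → ℝ) where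
  carrier := {x | ∀ y ∈ Γ, ∃ n : ℤ, dotProduct x y = (n : ℝ)}
  zero_mem' := by
    intro y _
    exact ⟨0, by simp⟩
  add_mem' := by
    intro a b ha hb y hy
    obtain ⟨n, hn⟩ := ha y hy
    obtain ⟨m, hm⟩ := hb y hy
    exact ⟨n + m, by rw [add_dotProduct, hn, hm]; push_cast; ring⟩
  neg_mem' := by
    intro a ha y hy
    obtain ⟨n, hn⟩ := ha y hy
    exact ⟨-n, by rw [neg_dotProduct, hn]; push_cast; ring⟩

/-- `Γ` is a (full-rank) lattice in `ℝ^d`: the `ℤ`-span of an `ℝ`-basis. -/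
def IsLattice {d : ℕ} (Γ : AddSubgroup (Fin d → ℝ)) : Prop :=
  ∃ b : Module.Basis (Fin d) ℝ (Fin d → ℝ), Γ = (Submodule.span ℤ (Set.range ⇑b)).toAddSubgroup

/-- Two lattices are commensurate if their intersection has finite index in both. -/
def Commensurate {d : ℕ} (Γ₁ Γ₂ : AddSubgroup (Fin d → ℝ)) : Prop :=
  (Γ₁ ⊓ Γ₂).relIndex Γ₁ ≠ 0 ∧ (Γ₁ ⊓ Γ₂).relIndex Γ₂ ≠ 0

/-- The image `RΓ` of a lattice under a matrix `R`. -/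
def latmap {d : ℕ} (R : Matrix (Fin d) (Fin d) ℝ) (Γ : AddSubgroup (Fin d → ℝ)) :
    AddSubgroup (Fin d → ℝ) :=
  Γ.map R.mulVecLin.toAddMonoidHom


section Aux

variable {A : Type*} [AddGroup A]

lemma myRelindexMapEquiv (e : A ≃+ A) (H K : AddSubgroup A) :
    (H.map (e : A →+ A)).relIndex (K.map (e : A →+ A)) = H.relIndex K := by
  rw [AddSubgroup.map_equiv_eq_comap_symm e H, AddSubgroup.relIndex_comap]
  congr 1
  ext x
  simp [AddSubgroup.mem_map]

end Aux

lemma myCommIff {d : ℕ} (H K : AddSubgroup (Fin d → ℝ)) :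
    Commensurate H K ↔ (K.relIndex H ≠ 0 ∧ H.relIndex K ≠ 0) := by
  unfold Commensurate
  rw [AddSubgroup.inf_relIndex_left, AddSubgroup.inf_relIndex_right]

lemma myCommRefl {d : ℕ} (H : AddSubgroup (Fin d → ℝ)) : Commensurate H H := by
  simp [myCommIff, AddSubgroup.relIndex_self]

lemma myCommSymm {d : ℕ} {H K : AddSubgroup (Fin d → ℝ)} (h : Commensurate H K) :
    Commensurate K H := by
  rw [myCommIff] at h ⊢; exact h.symm

lemma myCommTrans {d : ℕ} {H K L : AddSubgroup (Fin d → ℝ)} (h1 : Commensurate H K)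
    (h2 : Commensurate K L) : Commensurate H L := by
  rw [myCommIff] at h1 h2 ⊢
  exact ⟨AddSubgroup.relIndex_ne_zero_trans h2.1 h1.1,
    AddSubgroup.relIndex_ne_zero_trans h1.2 h2.2⟩

lemma myLatmapEq {d : ℕ} (R : Matrix.orthogonalGroup (Fin d) ℝ) (Γ : AddSubgroup (Fin d → ℝ)) :
    latmap (R : Matrix (Fin d) (Fin d) ℝ) Γ =
      Γ.map ((Matrix.UnitaryGroup.toLinearEquiv R).toAddEquiv : (Fin d → ℝ) →+ (Fin d → ℝ)) := by
  unfold latmap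
  congr 1

lemma myCommMap {d : ℕ} (R : Matrix.orthogonalGroup (Fin d) ℝ) {H K : AddSubgroup (Fin d → ℝ)}
    (h : Commensurate H K) :
    Commensurate (latmap (R : Matrix (Fin d) (Fin d) ℝ) H)
      (latmap (R : Matrix (Fin d) (Fin d) ℝ) K) := by
  rw [myCommIff] at h ⊢
  rw [myLatmapEq, myLatmapEq, myRelindexMapEquiv, myRelindexMapEquiv]
  exact h

lemma myLatmapMul {d : ℕ} (A B : Matrix (Fin d) (Fin d) ℝ) (Γ : AddSubgroup (Fin d → ℝ)) :
    latmap (A * B) Γ = latmap A (latmap B Γ) := by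
  unfold latmap
  rw [AddSubgroup.map_map]
  congr 1
  ext x
  simp [Matrix.mulVecLin_mul]

lemma myLatmapOne {d : ℕ} (Γ : AddSubgroup (Fin d → ℝ)) :
    latmap (1 : Matrix (Fin d) (Fin d) ℝ) Γ = Γ := by
  unfold latmap
  ext x
  simp [Matrix.mulVecLin_one]

/-- For a full-rank lattice `Γ` in `ℝ^d`, the set `OC(Γ)` of coincidence isometries
forms a subgroup of `O(d)`. -/
theorem stmt5 {d : ℕ} (Γ : AddSubgroup (Fin d → ℝ)) (hΓ : IsLattice Γ) :
    ∃ S : Subgroup ↥(Matrix.orthogonalGroup (Fin d) ℝ),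
      ∀ R : ↥(Matrix.orthogonalGroup (Fin d) ℝ),
        R ∈ S ↔ Commensurate Γ (latmap (R : Matrix (Fin d) (Fin d) ℝ) Γ) := by
  have hone : Commensurate Γ (latmap ((1 : Matrix.orthogonalGroup (Fin d) ℝ) : Matrix (Fin d) (Fin d) ℝ) Γ) := by
    rw [show ((1 : Matrix.orthogonalGroup (Fin d) ℝ) : Matrix (Fin d) (Fin d) ℝ) = 1 from rfl,
      myLatmapOne]
    exact myCommRefl Γ
  have hmul : ∀ A B : Matrix.orthogonalGroup (Fin d) ℝ,
      Commensurate Γ (latmap (A : Matrix (Fin d) (Fin d) ℝ) Γ) →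
      Commensurate Γ (latmap (B : Matrix (Fin d) (Fin d) ℝ) Γ) →
      Commensurate Γ (latmap ((A * B : Matrix.orthogonalGroup (Fin d) ℝ) : Matrix (Fin d) (Fin d) ℝ) Γ) := by
    intro A B hA hB
    rw [show ((A * B : Matrix.orthogonalGroup (Fin d) ℝ) : Matrix (Fin d) (Fin d) ℝ)
        = (A : Matrix (Fin d) (Fin d) ℝ) * (B : Matrix (Fin d) (Fin d) ℝ) from rfl,
      myLatmapMul]
    exact myCommTrans hA (myCommMap A hB)
  have hinv : ∀ A : Matrix.orthogonalGroup (Fin d) ℝ,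
      Commensurate Γ (latmap (A : Matrix (Fin d) (Fin d) ℝ) Γ) →
      Commensurate Γ (latmap ((A⁻¹ : Matrix.orthogonalGroup (Fin d) ℝ) : Matrix (Fin d) (Fin d) ℝ) Γ) := by
    intro A hA
    have h := myCommMap A⁻¹ hA
    rw [← myLatmapMul, show ((A⁻¹ : Matrix.orthogonalGroup (Fin d) ℝ) : Matrix (Fin d) (Fin d) ℝ)
        * (A : Matrix (Fin d) (Fin d) ℝ)
        = ((A⁻¹ * A : Matrix.orthogonalGroup (Fin d) ℝ) : Matrix (Fin d) (Fin d) ℝ) from rfl,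
      inv_mul_cancel] at h
    rw [show ((1 : Matrix.orthogonalGroup (Fin d) ℝ) : Matrix (Fin d) (Fin d) ℝ) = 1 from rfl,
      myLatmapOne] at h
    exact myCommSymm h
  exact ⟨{ carrier := {R | Commensurate Γ (latmap (R : Matrix (Fin d) (Fin d) ℝ) Γ)},
           one_mem' := hone,
           mul_mem' := fun {A B} hA hB => hmul A B hA hB,
           inv_mem' := fun {A} hA => hinv A hA },
         fun R => Iff.rfl⟩
end

section
/- If R is a coincidence isometry of a lattice Γ, then so is R⁻¹, and the coincidence indices agree: [Γ : Γ ∩ RΓ] = [Γ : Γ ∩ R⁻¹Γ]. -/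
open Submodule Module

section Aux

variable {d : ℕ}

private lemma myDiscrete {N L : Submodule ℤ (Fin d → ℝ)} (h : N ≤ L) [DiscreteTopology L] :
    DiscreteTopology N :=
  DiscreteTopology.of_subset (s := (L : Set (Fin d → ℝ))) inferInstance h

private lemma myspan {N L : Submodule ℤ (Fin d → ℝ)} (hNL : N ≤ L) [DiscreteTopology L]
    [IsZLattice ℝ L] (h : N.toAddSubgroup.relIndex L.toAddSubgroup ≠ 0) :
    span ℝ (N : Set (Fin d → ℝ)) = ⊤ := by
  set m := N.toAddSubgroup.relIndex L.toAddSubgroup with hm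
  have key : ∀ x ∈ L, m • x ∈ N := by
    intro x hx
    have h1 := (N.toAddSubgroup.addSubgroupOf L.toAddSubgroup).nsmul_index_mem
      (⟨x, hx⟩ : L.toAddSubgroup)
    have h2 : (N.toAddSubgroup.addSubgroupOf L.toAddSubgroup).index = m := rfl
    rw [h2] at h1
    simpa [AddSubgroup.mem_addSubgroupOf] using h1
  rw [eq_top_iff, ← IsZLattice.span_top (L := L) (K := ℝ), span_le]
  intro x hx
  have h3 : (m : ℤ) • x ∈ N := by
    have := key x hx
    simpa using this
  have h4 : ((m : ℤ) • x : Fin d → ℝ) ∈ span ℝ (N : Set (Fin d → ℝ)) := subset_span h3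
  have h5 : x = ((m : ℝ))⁻¹ • ((m : ℤ) • x) := by
    rw [← Int.cast_smul_eq_zsmul ℝ, smul_smul]
    norm_num
    rw [inv_mul_cancel₀ (by exact_mod_cast h), one_smul]
  rw [h5]
  exact Submodule.smul_mem _ _ h4

private lemma covkey (L N : Submodule ℤ (Fin d → ℝ)) [DiscreteTopology L] [IsZLattice ℝ L]
    [DiscreteTopology N] [IsZLattice ℝ N] (hNL : N ≤ L)
    (snf : Basis.SmithNormalForm (N.comap L.subtype) (Fin d) d) :
    ZLattice.covolume N = ((∏ i : Fin d, (snf.a i).natAbs : ℕ) : ℝ) * ZLattice.covolume L := by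
  classical
  let bN2 : Basis (Fin d) ℤ ↥N := snf.bN.map (Submodule.comapSubtypeEquivOfLe hNL)
  have hσ : Function.Bijective snf.f :=
    (Fintype.bijective_iff_injective_and_card snf.f).2 ⟨snf.f.injective, rfl⟩
  let σ : Equiv.Perm (Fin d) := Equiv.ofBijective snf.f hσ
  have key : (Matrix.of (Subtype.val ∘ ⇑bN2)) =
      Matrix.of (fun i j =>
        ((snf.a i : ℝ)) * (Matrix.of (Subtype.val ∘ ⇑snf.bM)).submatrix σ id i j) := by
    ext i j
    simp only [Matrix.of_apply, Function.comp_apply, Matrix.submatrix_apply, id]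
    have h0 := snf.snf i
    have h1 : ((bN2 i : (Fin d → ℝ))) = ((snf.bN i : ↥L) : Fin d → ℝ) := by
      simp only [bN2, Basis.map_apply]
      rw [Submodule.comapSubtypeEquivOfLe_apply_coe]
    rw [h1, h0]
    push_cast
    simp [σ, Equiv.ofBijective]
  rw [ZLattice.covolume_eq_det N bN2, ZLattice.covolume_eq_det L snf.bM, key]
  rw [Matrix.det_mul_column, Matrix.det_permute, abs_mul, abs_mul]
  have hsign : |((Equiv.Perm.sign σ : ℤ) : ℝ)| = 1 := by
    rcases Int.units_eq_one_or (Equiv.Perm.sign σ) with h | h <;> rw [h] <;> norm_num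
  rw [hsign, one_mul]
  congr 1
  rw [Finset.abs_prod]
  push_cast
  exact Finset.prod_congr rfl fun i _ => by rw [Nat.cast_natAbs, Int.cast_abs]

private lemma cov (L N : Submodule ℤ (Fin d → ℝ)) [DiscreteTopology L] [IsZLattice ℝ L]
    [DiscreteTopology N] [IsZLattice ℝ N] (hNL : N ≤ L) :
    N.toAddSubgroup.relIndex L.toAddSubgroup ≠ 0 ∧
      ZLattice.covolume N
        = (N.toAddSubgroup.relIndex L.toAddSubgroup : ℝ) * ZLattice.covolume L := by
  classical
  have hrel : N.toAddSubgroup.relIndex L.toAddSubgroup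
      = (N.comap L.subtype).toAddSubgroup.index := rfl
  have hcard : Fintype.card (Module.Free.ChooseBasisIndex ℤ ↥L) = d := by
    rw [← Module.finrank_eq_card_chooseBasisIndex, ZLattice.rank ℝ]
    simp
  let bL : Basis (Fin d) ℤ ↥L :=
    (Module.Free.chooseBasis ℤ ↥L).reindex (Fintype.equivFinOfCardEq hcard)
  obtain ⟨n, snf⟩ := (N.comap L.subtype).smithNormalForm bL
  have hn : n = d := by
    have h1 : finrank ℤ (N.comap L.subtype) = n := by
      rw [finrank_eq_card_basis snf.bN, Fintype.card_fin]
    have h2 : finrank ℤ (N.comap L.subtype) = finrank ℤ N :=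
      (Submodule.comapSubtypeEquivOfLe hNL).finrank_eq
    have h3 : finrank ℤ ↥N = d := by rw [ZLattice.rank ℝ]; simp
    omega
  subst hn
  have ha : ∀ i, snf.a i ≠ 0 := by
    intro i hi
    apply snf.bN.ne_zero i
    have h0 := snf.snf i
    rw [hi] at h0
    simpa using Subtype.ext (by simpa using h0)
  have hidx : (N.comap L.subtype).toAddSubgroup.index = ∏ i : Fin n, (snf.a i).natAbs := by
    rw [snf.toAddSubgroup_index_eq_ite]
    simp [Ideal.span_singleton_toAddSubgroup_eq_zmultiples, Int.index_zmultiples]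
  refine ⟨?_, ?_⟩
  · rw [hrel, hidx]
    exact Finset.prod_ne_zero_iff.2 fun i _ => by simpa using ha i
  · rw [hrel, hidx]
    exact covkey L N hNL snf

end Aux

/-- If `R` is a coincidence isometry of a lattice `Γ`, so is `R⁻¹`, with the same
coincidence index: `[Γ : Γ ∩ RΓ] = [Γ : Γ ∩ R⁻¹Γ]`. -/
theorem stmt6 {d : ℕ} (Γ : AddSubgroup (Fin d → ℝ)) (hΓ : IsLattice Γ)
    (R : ↥(Matrix.orthogonalGroup (Fin d) ℝ))
    (h : (Γ ⊓ latmap (R : Matrix (Fin d) (Fin d) ℝ) Γ).relIndex Γ ≠ 0) :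
    (Γ ⊓ latmap ((R⁻¹ : ↥(Matrix.orthogonalGroup (Fin d) ℝ)) : Matrix (Fin d) (Fin d) ℝ) Γ).relIndex Γ ≠ 0 ∧
    (Γ ⊓ latmap (R : Matrix (Fin d) (Fin d) ℝ) Γ).relIndex Γ =
      (Γ ⊓ latmap ((R⁻¹ : ↥(Matrix.orthogonalGroup (Fin d) ℝ)) : Matrix (Fin d) (Fin d) ℝ) Γ).relIndex Γ := by
  obtain ⟨b, hb⟩ := hΓ
  have hR1 : (R : Matrix (Fin d) (Fin d) ℝ) *
      ((R⁻¹ : ↥(Matrix.orthogonalGroup (Fin d) ℝ)) : Matrix (Fin d) (Fin d) ℝ) = 1 :=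
    congrArg Subtype.val (mul_inv_cancel R)
  have hR2 : ((R⁻¹ : ↥(Matrix.orthogonalGroup (Fin d) ℝ)) : Matrix (Fin d) (Fin d) ℝ) *
      (R : Matrix (Fin d) (Fin d) ℝ) = 1 :=
    congrArg Subtype.val (inv_mul_cancel R)
  let eR : (Fin d → ℝ) ≃ₗ[ℝ] (Fin d → ℝ) :=
    LinearEquiv.ofLinear (Matrix.mulVecLin (R : Matrix (Fin d) (Fin d) ℝ))
      (Matrix.mulVecLin ((R⁻¹ : ↥(Matrix.orthogonalGroup (Fin d) ℝ)) : Matrix (Fin d) (Fin d) ℝ))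
      (by rw [← Matrix.mulVecLin_mul, hR1, Matrix.mulVecLin_one])
      (by rw [← Matrix.mulVecLin_mul, hR2, Matrix.mulVecLin_one])
  set L : Submodule ℤ (Fin d → ℝ) := span ℤ (Set.range ⇑b) with hL
  set L₂ : Submodule ℤ (Fin d → ℝ) := span ℤ (Set.range ⇑(b.map eR)) with hL2
  have hmap : latmap (R : Matrix (Fin d) (Fin d) ℝ) L.toAddSubgroup = L₂.toAddSubgroup := by
    have h1 : Submodule.map (eR.toLinearMap.restrictScalars ℤ) L = L₂ := by
      rw [hL, Submodule.map_span, ← Set.range_comp]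
      congr 1
    rw [← h1, Submodule.map_toAddSubgroup]
    rfl
  have hdet : |(R : Matrix (Fin d) (Fin d) ℝ).det| = 1 := by
    have hmem := (Matrix.mem_orthogonalGroup_iff (Fin d) ℝ).1 R.2
    have := congrArg Matrix.det hmem
    rw [Matrix.det_mul, Matrix.det_one, Matrix.det_transpose] at this
    rcases mul_self_eq_one_iff.1 this with h' | h' <;> rw [h'] <;> norm_num
  haveI : IsZLattice ℝ L := instIsZLatticeRealSpan b
  haveI : IsZLattice ℝ L₂ := instIsZLatticeRealSpan (b.map eR)
  have hcovL : ZLattice.covolume L₂ = ZLattice.covolume L := by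
    rw [ZLattice.covolume_eq_det L₂ ((b.map eR).restrictScalars ℤ),
      ZLattice.covolume_eq_det L (b.restrictScalars ℤ)]
    have hM : Matrix.of (Subtype.val ∘ ⇑((b.map eR).restrictScalars ℤ)) =
        Matrix.of (Subtype.val ∘ ⇑(b.restrictScalars ℤ)) *
          ((R : Matrix (Fin d) (Fin d) ℝ).transpose) := by
      ext i k
      simp only [Matrix.of_apply, Function.comp_apply, Basis.restrictScalars_apply,
        Basis.map_apply, Matrix.mul_apply, Matrix.transpose_apply]
      show ((R : Matrix (Fin d) (Fin d) ℝ).mulVecLin (b i)) k = _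
      simp [Matrix.mulVecLin, Matrix.mulVec, dotProduct, mul_comm]
    rw [hM, Matrix.det_mul, abs_mul, Matrix.det_transpose, hdet, mul_one]
  subst hb
  set H : Submodule ℤ (Fin d → ℝ) := L ⊓ L₂ with hHdef
  have hH : L.toAddSubgroup ⊓ latmap (R : Matrix (Fin d) (Fin d) ℝ) L.toAddSubgroup
      = H.toAddSubgroup := by rw [hmap]; rfl
  rw [hH] at h
  haveI : DiscreteTopology H := myDiscrete inf_le_left
  haveI : IsZLattice ℝ H := ⟨myspan inf_le_left h⟩
  obtain ⟨hne1, he1⟩ := cov L H inf_le_left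
  obtain ⟨hne2, he2⟩ := cov L₂ H inf_le_right
  have hmm : H.toAddSubgroup.relIndex L.toAddSubgroup
      = H.toAddSubgroup.relIndex L₂.toAddSubgroup := by
    have h0 : ZLattice.covolume L ≠ 0 := ZLattice.covolume_ne_zero L MeasureTheory.volume
    rw [hcovL] at he2
    rw [he1] at he2
    have := mul_right_cancel₀ h0 he2
    exact_mod_cast this
  set g := (((R⁻¹ : ↥(Matrix.orthogonalGroup (Fin d) ℝ)) :
      Matrix (Fin d) (Fin d) ℝ).mulVecLin).toAddMonoidHom with hg
  have hginj : Function.Injective ⇑g := by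
    have hli : ∀ x, (R : Matrix (Fin d) (Fin d) ℝ).mulVecLin (g x) = x := by
      intro x
      show ((R : Matrix (Fin d) (Fin d) ℝ).mulVecLin ∘ₗ
        ((R⁻¹ : ↥(Matrix.orthogonalGroup (Fin d) ℝ)) :
          Matrix (Fin d) (Fin d) ℝ).mulVecLin) x = x
      rw [← Matrix.mulVecLin_mul, hR1, Matrix.mulVecLin_one]
      rfl
    exact Function.LeftInverse.injective hli
  have cg2 : AddSubgroup.map g (latmap (R : Matrix (Fin d) (Fin d) ℝ) L.toAddSubgroup)
      = L.toAddSubgroup := by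
    rw [latmap, AddSubgroup.map_map]
    have hid : g.comp ((R : Matrix (Fin d) (Fin d) ℝ).mulVecLin.toAddMonoidHom)
        = AddMonoidHom.id _ := by
      refine AddMonoidHom.ext fun x => ?_
      show (((R⁻¹ : ↥(Matrix.orthogonalGroup (Fin d) ℝ)) :
        Matrix (Fin d) (Fin d) ℝ).mulVecLin ∘ₗ
          (R : Matrix (Fin d) (Fin d) ℝ).mulVecLin) x = x
      rw [← Matrix.mulVecLin_mul, hR2, Matrix.mulVecLin_one]
      rfl
    rw [hid, AddSubgroup.map_id]
  have transfer : (L.toAddSubgroup ⊓ latmap (R : Matrix (Fin d) (Fin d) ℝ)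
      L.toAddSubgroup).relIndex (latmap (R : Matrix (Fin d) (Fin d) ℝ) L.toAddSubgroup)
      = (L.toAddSubgroup ⊓ latmap ((R⁻¹ : ↥(Matrix.orthogonalGroup (Fin d) ℝ)) :
        Matrix (Fin d) (Fin d) ℝ) L.toAddSubgroup).relIndex L.toAddSubgroup := by
    have h5 := AddSubgroup.relIndex_comap (AddSubgroup.map g (L.toAddSubgroup ⊓
      latmap (R : Matrix (Fin d) (Fin d) ℝ) L.toAddSubgroup)) g
      (latmap (R : Matrix (Fin d) (Fin d) ℝ) L.toAddSubgroup)
    rw [AddSubgroup.comap_map_eq_self_of_injective hginj] at h5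
    rw [h5, AddSubgroup.map_inf _ _ g hginj, cg2]
    rw [show AddSubgroup.map g L.toAddSubgroup = latmap ((R⁻¹ :
      ↥(Matrix.orthogonalGroup (Fin d) ℝ)) : Matrix (Fin d) (Fin d) ℝ) L.toAddSubgroup from rfl]
    rw [inf_comm]
  have hA : (L.toAddSubgroup ⊓ latmap ((R⁻¹ : ↥(Matrix.orthogonalGroup (Fin d) ℝ)) :
      Matrix (Fin d) (Fin d) ℝ) L.toAddSubgroup).relIndex L.toAddSubgroup
      = H.toAddSubgroup.relIndex L₂.toAddSubgroup := by
    rw [← transfer, hH, hmap]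
  constructor
  · rw [hA]; exact hne2
  · rw [hA, hH, hmm]
end

section
/- If Γ₂ is a sublattice of Γ₁ of finite index m, then OC(Γ₂) = OC(Γ₁), and for any R in this group the index Σ₁(R) = [Γ₁ : Γ₁ ∩ RΓ₁] divides m·Σ₂(R) where Σ₂(R) = [Γ₂ : Γ₂ ∩ RΓ₂]. -/
/-- relindex is preserved under the image of an injective additive hom. -/
lemma relIndex_map_of_injective {G G' : Type*} [AddGroup G] [AddGroup G']
    (f : G →+ G') (hf : Function.Injective f) (H K : AddSubgroup G) :
    (H.map f).relIndex (K.map f) = H.relIndex K := by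
  rw [← AddSubgroup.relIndex_comap, AddSubgroup.comap_map_eq_self_of_injective hf]

/-- If `Γ₂` is a sublattice of `Γ₁` of finite index `m`, then `OC(Γ₂) = OC(Γ₁)` and for any
`R` in this group, `Σ₁(R)` divides `m · Σ₂(R)`. -/
theorem stmt7 {d : ℕ} (Γ₁ Γ₂ : AddSubgroup (Fin d → ℝ)) (h1 : IsLattice Γ₁)
    (hle : Γ₂ ≤ Γ₁) (m : ℕ) (hm : Γ₂.relIndex Γ₁ = m) (h0 : m ≠ 0) :
    (∀ R : ↥(Matrix.orthogonalGroup (Fin d) ℝ),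
      ((Γ₁ ⊓ latmap (R : Matrix (Fin d) (Fin d) ℝ) Γ₁).relIndex Γ₁ ≠ 0 ↔
       (Γ₂ ⊓ latmap (R : Matrix (Fin d) (Fin d) ℝ) Γ₂).relIndex Γ₂ ≠ 0)) ∧
    (∀ R : ↥(Matrix.orthogonalGroup (Fin d) ℝ),
      (Γ₁ ⊓ latmap (R : Matrix (Fin d) (Fin d) ℝ) Γ₁).relIndex Γ₁ ≠ 0 →
      (Γ₁ ⊓ latmap (R : Matrix (Fin d) (Fin d) ℝ) Γ₁).relIndex Γ₁ ∣
        m * (Γ₂ ⊓ latmap (R : Matrix (Fin d) (Fin d) ℝ) Γ₂).relIndex Γ₂) := by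
  have key : ∀ R : ↥(Matrix.orthogonalGroup (Fin d) ℝ),
      (Γ₂ ⊓ latmap (R : Matrix (Fin d) (Fin d) ℝ) Γ₂).relIndex Γ₁ =
      (Γ₂ ⊓ latmap (R : Matrix (Fin d) (Fin d) ℝ) Γ₂).relIndex Γ₂ * m ∧
      (Γ₁ ⊓ latmap (R : Matrix (Fin d) (Fin d) ℝ) Γ₁).relIndex Γ₁ ∣
      (Γ₂ ⊓ latmap (R : Matrix (Fin d) (Fin d) ℝ) Γ₂).relIndex Γ₁ ∧
      Function.Injective (R : Matrix (Fin d) (Fin d) ℝ).mulVecLin.toAddMonoidHom := by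
    intro R
    have hunit : IsUnit (R : Matrix (Fin d) (Fin d) ℝ) :=
      ⟨⟨(R : Matrix (Fin d) (Fin d) ℝ), star (R : Matrix (Fin d) (Fin d) ℝ),
        (Unitary.mem_iff.mp R.2).2, (Unitary.mem_iff.mp R.2).1⟩, rfl⟩
    have hinj : Function.Injective (R : Matrix (Fin d) (Fin d) ℝ).mulVecLin.toAddMonoidHom := by
      exact Matrix.mulVec_injective_iff_isUnit.2 hunit
    refine ⟨?_, ?_, hinj⟩
    · rw [← AddSubgroup.relIndex_mul_relIndex _ Γ₂ Γ₁ inf_le_left hle, hm]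
    · exact AddSubgroup.relIndex_dvd_of_le_left Γ₁
        (inf_le_inf hle (AddSubgroup.map_mono hle))
  constructor
  · intro R
    obtain ⟨keq, kdvd, hinj⟩ := key R
    constructor
    · intro h1R
      have hRm : (latmap (R : Matrix (Fin d) (Fin d) ℝ) Γ₂).relIndex
          (latmap (R : Matrix (Fin d) (Fin d) ℝ) Γ₁) = m := by
        rw [latmap, latmap, relIndex_map_of_injective _ hinj, hm]
      have hRΓ1 : (latmap (R : Matrix (Fin d) (Fin d) ℝ) Γ₁).relIndex Γ₁ ≠ 0 := by
        rwa [← AddSubgroup.inf_relIndex_left]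
      have hRΓ2 : (latmap (R : Matrix (Fin d) (Fin d) ℝ) Γ₂).relIndex Γ₁ ≠ 0 :=
        AddSubgroup.relIndex_ne_zero_trans (hRm ▸ h0) hRΓ1
      have hA : (Γ₂ ⊓ latmap (R : Matrix (Fin d) (Fin d) ℝ) Γ₂).relIndex Γ₁ ≠ 0 :=
        AddSubgroup.relIndex_inf_ne_zero (hm ▸ h0) hRΓ2
      rw [keq] at hA
      exact fun h => hA (by rw [h, zero_mul])
    · intro h2R
      have hne : (Γ₂ ⊓ latmap (R : Matrix (Fin d) (Fin d) ℝ) Γ₂).relIndex Γ₁ ≠ 0 := by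
        rw [keq]; exact mul_ne_zero h2R h0
      intro h
      rw [h] at kdvd
      exact hne (Nat.eq_zero_of_zero_dvd kdvd)
  · intro R _
    obtain ⟨keq, kdvd, -⟩ := key R
    rw [keq, mul_comm] at kdvd
    exact kdvd
end

section
/- An orthogonal transformation R ∈ O(d) is a coincidence isometry of ℤ^d if and only if the matrix of R has all rational entries; that is, OC(ℤ^d) = O(d, ℚ). -/
lemma mem_Zd_iff {d : ℕ} (x : Fin d → ℝ) : x ∈ Zd d ↔ ∀ i, ∃ n : ℤ, x i = n := by
  constructor
  · intro h i
    obtain ⟨n, hn⟩ := h i (Set.mem_univ i)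
    exact ⟨n, by simpa using hn.symm⟩
  · intro h i _
    obtain ⟨n, hn⟩ := h i
    exact ⟨n, by simp [hn]⟩

lemma mem_latmap_iff {d : ℕ} (R : Matrix (Fin d) (Fin d) ℝ) (Γ : AddSubgroup (Fin d → ℝ))
    (y : Fin d → ℝ) : y ∈ latmap R Γ ↔ ∃ x ∈ Γ, R.mulVec x = y := by
  simp [latmap, AddSubgroup.mem_map]

lemma rat_den_dvd_int (q : ℚ) (N : ℕ) (h : q.den ∣ N) : ∃ m : ℤ, (N : ℝ) * (q : ℝ) = m := by
  obtain ⟨c, hc⟩ := h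
  refine ⟨c * q.num, ?_⟩
  have hden : ((q.den : ℝ)) ≠ 0 := by exact_mod_cast q.den_nz
  rw [Rat.cast_def, hc]
  push_cast
  field_simp

/-- `R ∈ O(d)` is a coincidence isometry of `ℤ^d` iff all entries of `R` are rational:
`OC(ℤ^d) = O(d,ℚ)`. -/
theorem stmt9 {d : ℕ} (R : Matrix (Fin d) (Fin d) ℝ)
    (hR : R ∈ Matrix.orthogonalGroup (Fin d) ℝ) :
    (Zd d ⊓ latmap R (Zd d)).relIndex (Zd d) ≠ 0 ↔ ∀ i j, ∃ q : ℚ, R i j = (q : ℝ) := by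
  have hR1 : R * star R = 1 := (Matrix.mem_orthogonalGroup_iff _ _).mp hR
  have hR2 : star R * R = 1 := (Matrix.mem_orthogonalGroup_iff' _ _).mp hR
  constructor
  · intro hne i j
    set n := (Zd d ⊓ latmap R (Zd d)).relIndex (Zd d) with hn
    set e : Fin d → ℝ := Pi.single i 1 with he
    have heZ : e ∈ Zd d := by
      rw [mem_Zd_iff]
      intro k
      refine ⟨if k = i then 1 else 0, ?_⟩
      simp [he, Pi.single_apply]
    have hcoe : ((n • (⟨e, heZ⟩ : Zd d) : Zd d) : Fin d → ℝ) = n • e := rfl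
    have hmem : n • e ∈ Zd d ⊓ latmap R (Zd d) := by
      have h1 := AddSubgroup.nsmul_index_mem
        ((Zd d ⊓ latmap R (Zd d)).addSubgroupOf (Zd d)) ⟨e, heZ⟩
      rw [AddSubgroup.mem_addSubgroupOf] at h1
      exact h1
    obtain ⟨x, hxZ, hxe⟩ := (mem_latmap_iff _ _ _).mp hmem.2
    have hx : x = (star R).mulVec (n • e) := by
      rw [← hxe, Matrix.mulVec_mulVec, hR2, Matrix.one_mulVec]
    have hxj : x j = (n : ℝ) * R i j := by
      rw [hx]
      simp [Matrix.mulVec, dotProduct, Matrix.star_apply, he, Pi.single_apply,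
        mul_ite, mul_comm]
    obtain ⟨m, hm⟩ := (mem_Zd_iff x).mp hxZ j
    have hn0 : (n : ℝ) ≠ 0 := by exact_mod_cast hne
    refine ⟨(m : ℚ) / (n : ℚ), ?_⟩
    have hnm : (n : ℝ) * R i j = (m : ℝ) := by rw [← hxj, hm]
    push_cast
    field_simp
    linarith [hnm]
  · intro hQ
    choose q hq using hQ
    set N : ℕ := ∏ i : Fin d, ∏ j : Fin d, (q i j).den with hNdef
    have hN0 : 0 < N := by
      apply Finset.prod_pos
      intro i _
      apply Finset.prod_pos
      intro j _
      exact (q i j).pos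
    haveI : NeZero N := ⟨hN0.ne'⟩
    have hNq : ∀ i j, ∃ m : ℤ, (N : ℝ) * R i j = m := by
      intro i j
      rw [hq i j]
      apply rat_den_dvd_int
      exact dvd_trans (Finset.dvd_prod_of_mem (fun j' => (q i j').den) (Finset.mem_univ j))
        (Finset.dvd_prod_of_mem (fun i' => ∏ j' : Fin d, (q i' j').den) (Finset.mem_univ i))
    choose m hm using hNq
    have hkey : ∀ w : Fin d → ℝ, (∀ i, ∃ k : ℤ, w i = (N : ℝ) * k) →
        w ∈ Zd d ⊓ latmap R (Zd d) := by
      intro w hw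
      choose k hk using hw
      rw [AddSubgroup.mem_inf]
      constructor
      · rw [mem_Zd_iff]
        intro i
        exact ⟨(N : ℤ) * k i, by rw [hk i]; push_cast; ring⟩
      · rw [mem_latmap_iff]
        refine ⟨(star R).mulVec w, ?_, ?_⟩
        · rw [mem_Zd_iff]
          intro i
          refine ⟨∑ j, m j i * k j, ?_⟩
          simp only [Matrix.mulVec, dotProduct]
          push_cast
          apply Finset.sum_congr rfl
          intro j _
          show star (R j i) * w j = _
          rw [star_trivial, hk j, ← hm j i]
          ring
        · rw [Matrix.mulVec_mulVec, hR1, Matrix.one_mulVec]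
    have hfin : Finite ((Zd d) ⧸ (Zd d ⊓ latmap R (Zd d)).addSubgroupOf (Zd d)) := by
      apply Finite.of_surjective
        (f := fun z : Fin d → ZMod N =>
          (QuotientAddGroup.mk
            (⟨fun i => ((z i).val : ℝ), by
              rw [mem_Zd_iff]; intro i; exact ⟨(z i).val, by push_cast; rfl⟩⟩ : Zd d)))
      intro y
      induction y using QuotientAddGroup.induction_on with
      | H g =>
        obtain ⟨x, hx⟩ := g
        choose n hn using (mem_Zd_iff x).mp hx
        refine ⟨fun i => ((n i : ZMod N)), ?_⟩
        rw [QuotientAddGroup.eq]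
        rw [AddSubgroup.mem_addSubgroupOf]
        apply hkey
        intro i
        refine ⟨n i / N, ?_⟩
        have hmod : ((((n i : ZMod N)).val : ℤ)) = n i % N := ZMod.val_intCast (n i)
        have hNd : n i - n i % N = N * (n i / N) := by rw [Int.emod_def]; ring
        show -(((n i : ZMod N)).val : ℝ) + x i = (N : ℝ) * (n i / N : ℤ)
        rw [hn i]
        rw [show (((n i : ZMod N)).val : ℝ) = (((n i % N : ℤ)) : ℝ) by exact_mod_cast congrArg (Int.cast : ℤ → ℝ) hmod]
        rw [show ((N : ℝ) * ((n i / N : ℤ) : ℝ)) = (((N * (n i / N) : ℤ)) : ℝ) by push_cast; ring]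
        rw [← hNd]
        push_cast
        ring
    exact AddSubgroup.index_ne_zero_of_finite
end

section
/- Every coincidence rotation of the square lattice, i.e. every z ∈ ℚ(i) with |z| = 1, can be written as z = α/ᾱ times a power of i, for some Gaussian integer α whose prime factors all lie above rational primes p ≡ 1 (mod 4); equivalently, z is a power of i times a finite product of factors (ω_p/ω̄_p)^{n_p} over primes p ≡ 1 (mod 4), where p = ω_p ω̄_p in ℤ[i]. -/
open GaussianInt Complex

namespace Stmt11Aux

lemma unit_pow (u : GaussianInt) (hu : IsUnit u) :
    ∃ m : ℕ, toComplex u = Complex.I ^ m := by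
  have h1 : u.norm = 1 := (Zsqrtd.norm_eq_one_iff' (by norm_num) u).2 hu
  have h2 : u.re * u.re + u.im * u.im = 1 := by
    have : u.norm = u.re * u.re + u.im * u.im := by simp [Zsqrtd.norm]
    rw [this] at h1; exact h1
  have h3 : u.re.natAbs * u.re.natAbs + u.im.natAbs * u.im.natAbs = 1 := by
    zify
    rw [abs_mul_abs_self, abs_mul_abs_self]
    exact h2
  have hr1 : u.re.natAbs ≤ 1 := by
    by_contra h
    push_neg at h
    have := Nat.mul_le_mul h h
    omega
  have hi1 : u.im.natAbs ≤ 1 := by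
    by_contra h
    push_neg at h
    have := Nat.mul_le_mul h h
    omega
  rcases Nat.le_one_iff_eq_zero_or_eq_one.mp hr1 with hx | hx <;>
    rcases Nat.le_one_iff_eq_zero_or_eq_one.mp hi1 with hy | hy
  · rw [hx, hy] at h3; omega
  · have h0 : u.re = 0 := Int.natAbs_eq_zero.mp hx
    rcases Int.natAbs_eq u.im with h | h <;> rw [hy] at h
    · exact ⟨1, by rw [toComplex_def, h0, h]; simp⟩
    · refine ⟨3, ?_⟩
      rw [toComplex_def, h0, h, pow_succ, Complex.I_sq]
      simp
  · have h0 : u.im = 0 := Int.natAbs_eq_zero.mp hy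
    rcases Int.natAbs_eq u.re with h | h <;> rw [hx] at h
    · exact ⟨0, by rw [toComplex_def, h0, h]; simp⟩
    · refine ⟨2, ?_⟩
      rw [toComplex_def, h0, h, Complex.I_sq]
      simp
  · rw [hx, hy] at h3; omega

lemma exists_nat_prime_dvd (q : GaussianInt) (hq : Prime q) :
    ∃ p : ℕ, p.Prime ∧ q ∣ (p : GaussianInt) := by
  have hq0 : q ≠ 0 := hq.ne_zero
  set n : ℕ := q.norm.natAbs with hn
  have hn0 : n ≠ 0 := by
    simp only [hn, Int.natAbs_ne_zero]
    intro h
    exact hq0 ((Zsqrtd.norm_eq_zero_iff (by norm_num) q).mp h)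
  have hdn : q ∣ (n : GaussianInt) := by
    rw [natCast_natAbs_norm, Zsqrtd.norm_eq_mul_conj]
    exact Dvd.intro _ rfl
  have hprod : (n.primeFactorsList.map (fun p : ℕ => (p : GaussianInt))).prod
      = (n : GaussianInt) := by
    rw [← Nat.cast_list_prod, Nat.prod_primeFactorsList hn0]
  have hdvd : q ∣ (↑(n.primeFactorsList.map (fun p : ℕ => (p : GaussianInt)))
      : Multiset GaussianInt).prod := by
    rwa [Multiset.prod_coe, hprod]
  obtain ⟨x, hx, hqx⟩ := hq.exists_mem_multiset_dvd hdvd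
  rw [Multiset.mem_coe, List.mem_map] at hx
  obtain ⟨p, hp, rfl⟩ := hx
  exact ⟨p, Nat.prime_of_mem_primeFactorsList hp, hqx⟩

set_option synthInstance.maxHeartbeats 1000000 in
lemma prime_one_add_i : Prime (⟨1, 1⟩ : GaussianInt) := by
  rw [← irreducible_iff_prime]
  constructor
  · intro h
    have := (Zsqrtd.norm_eq_one_iff' (by norm_num) _).2 h
    simp [Zsqrtd.norm] at this
  · intro x y hxy
    have hnorm : x.norm.natAbs * y.norm.natAbs = 2 := by
      rw [← Int.natAbs_mul, ← Zsqrtd.norm_mul, ← hxy]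
      decide
    rcases (Nat.prime_two.eq_one_or_self_of_dvd x.norm.natAbs
      ⟨y.norm.natAbs, hnorm.symm⟩) with h | h
    · exact Or.inl (Zsqrtd.norm_eq_one_iff.mp h)
    · right
      rw [h] at hnorm
      have : y.norm.natAbs = 1 := by omega
      exact Zsqrtd.norm_eq_one_iff.mp this

lemma star_eq (q : GaussianInt) (hq : Prime q)
    (h : ¬ ∃ p : ℕ, p.Prime ∧ p % 4 = 1 ∧ q ∣ (p : GaussianInt)) :
    ∃ m : ℕ, toComplex (star q) = Complex.I ^ m * toComplex q := by
  obtain ⟨p, hp, hdvd⟩ := exists_nat_prime_dvd q hq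
  have hp4 : p % 4 ≠ 1 := fun h1 => h ⟨p, hp, h1, hdvd⟩
  have hmain : ∃ π w : GaussianInt, IsUnit w ∧ star π = w * π ∧ Associated q π := by
    by_cases hp2 : p = 2
    · refine ⟨⟨1, 1⟩, ⟨0, -1⟩, IsUnit.of_mul_eq_one (⟨0, 1⟩ : GaussianInt) (by decide),
        by decide, ?_⟩
      have h2 : (⟨1, 1⟩ : GaussianInt) * ⟨1, 1⟩ = ⟨0, 1⟩ * ((2 : ℕ) : GaussianInt) := by
        decide
      have hq2 : q ∣ (⟨1, 1⟩ : GaussianInt) * ⟨1, 1⟩ := by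
        rw [h2]
        subst hp2
        exact hdvd.mul_left _
      rcases hq.2.2 _ _ hq2 with h1 | h1 <;>
        exact hq.associated_of_dvd prime_one_add_i h1
    · have hodd : p % 2 = 1 := Nat.odd_iff.mp (hp.odd_of_ne_two hp2)
      have h3 : p % 4 = 3 := by omega
      haveI : Fact p.Prime := ⟨hp⟩
      have hpp : Prime (p : GaussianInt) :=
        (GaussianInt.prime_iff_mod_four_eq_three_of_nat_prime p).2 h3
      exact ⟨(p : GaussianInt), 1, isUnit_one, by simp, hq.associated_of_dvd hpp hdvd⟩
  obtain ⟨π, w, hw, hsπ, hassoc⟩ := hmain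
  obtain ⟨u, hu⟩ := hassoc
  have hstar : star q = (w * ↑u * star ↑(u⁻¹)) * q := by
    have h1 : star q * star (↑u : GaussianInt) = w * (q * ↑u) := by
      rw [← star_mul', hu, hsπ]
    have h2 : star (↑u : GaussianInt) * star (↑(u⁻¹) : GaussianInt) = 1 := by
      rw [← star_mul', Units.mul_inv, star_one]
    calc star q = star q * (star (↑u : GaussianInt) * star (↑(u⁻¹) : GaussianInt)) := by
          rw [h2, mul_one]
      _ = (star q * star (↑u : GaussianInt)) * star (↑(u⁻¹) : GaussianInt) := by ring
      _ = w * (q * ↑u) * star (↑(u⁻¹) : GaussianInt) := by rw [h1]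
      _ = (w * ↑u * star (↑(u⁻¹) : GaussianInt)) * q := by ring
  have hunit : IsUnit (w * (↑u : GaussianInt) * star (↑(u⁻¹) : GaussianInt)) :=
    (hw.mul u.isUnit).mul ((u⁻¹).isUnit.star)
  obtain ⟨m, hm⟩ := unit_pow _ hunit
  refine ⟨m, ?_⟩
  rw [hstar, map_mul, hm]

lemma key (z : ℂ) : ∀ n : ℕ, ∀ α : GaussianInt, α.norm.natAbs = n → α ≠ 0 →
    ∀ k : ℕ, z * toComplex (star α) = Complex.I ^ k * toComplex α →
    ∃ (k' : ℕ) (β : GaussianInt), β ≠ 0 ∧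
      (∀ q : GaussianInt, Prime q → q ∣ β →
        ∃ p : ℕ, p.Prime ∧ p % 4 = 1 ∧ q ∣ (p : GaussianInt)) ∧
      z * toComplex (star β) = Complex.I ^ k' * toComplex β := by
  intro n
  induction n using Nat.strong_induction_on with
  | _ n ih =>
    intro α hn hα k hk
    by_cases hgood : ∀ q : GaussianInt, Prime q → q ∣ α →
        ∃ p : ℕ, p.Prime ∧ p % 4 = 1 ∧ q ∣ (p : GaussianInt)
    · exact ⟨k, α, hα, hgood, hk⟩
    · push_neg at hgood
      obtain ⟨q, hq, hqd, hbad⟩ := hgood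
      obtain ⟨m, hm⟩ := star_eq q hq (by
        intro ⟨p, h1, h2, h3⟩
        exact hbad p h1 h2 h3)
      obtain ⟨β, hβ⟩ := hqd
      have hβ0 : β ≠ 0 := by
        rintro rfl
        rw [mul_zero] at hβ
        exact hα hβ
      have hq0 : q ≠ 0 := hq.ne_zero
      have hqc : toComplex q ≠ 0 := fun h => hq0 (toComplex_eq_zero.mp h)
      -- norm decreases
      have hnq : 1 < q.norm.natAbs := by
        rcases Nat.lt_or_ge 1 q.norm.natAbs with h | h
        · exact h
        · interval_cases hqn : q.norm.natAbs
          · exact absurd ((Zsqrtd.norm_eq_zero_iff (by norm_num) q).mp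
              (Int.natAbs_eq_zero.mp hqn)) hq0
          · exact absurd (Zsqrtd.norm_eq_one_iff.mp hqn) hq.not_unit
      have hnβ : β.norm.natAbs < n := by
        have hmul : n = q.norm.natAbs * β.norm.natAbs := by
          rw [← hn, hβ, Zsqrtd.norm_mul, Int.natAbs_mul]
        have hβn0 : β.norm.natAbs ≠ 0 := by
          simp only [Int.natAbs_ne_zero]
          intro h
          exact hβ0 ((Zsqrtd.norm_eq_zero_iff (by norm_num) β).mp h)
        calc β.norm.natAbs < q.norm.natAbs * β.norm.natAbs := by
              exact (Nat.lt_mul_iff_one_lt_left (Nat.pos_of_ne_zero hβn0)).mpr hnq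
          _ = n := hmul.symm
      -- new equation
      have ealpha : toComplex (star α) =
          Complex.I ^ m * toComplex q * toComplex (star β) := by
        rw [hβ, star_mul', map_mul, hm]
      have eα2 : toComplex α = toComplex q * toComplex β := by
        rw [hβ, map_mul]
      rw [ealpha, eα2] at hk
      have hI4 : (Complex.I : ℂ) ^ (4 * m) = 1 := by
        rw [pow_mul, Complex.I_pow_four, one_pow]
      have hpow : Complex.I ^ m * Complex.I ^ (k + 3 * m) = Complex.I ^ k := by
        rw [← pow_add, show m + (k + 3 * m) = k + 4 * m by ring, pow_add, hI4, mul_one]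
      have hk' : z * toComplex (star β) = Complex.I ^ (k + 3 * m) * toComplex β := by
        refine mul_left_cancel₀ (pow_ne_zero m Complex.I_ne_zero) (mul_left_cancel₀ hqc ?_)
        calc toComplex q * (Complex.I ^ m * (z * toComplex (star β)))
            = z * (Complex.I ^ m * toComplex q * toComplex (star β)) := by ring
          _ = Complex.I ^ k * (toComplex q * toComplex β) := hk
          _ = (Complex.I ^ m * Complex.I ^ (k + 3 * m)) * (toComplex q * toComplex β) := by
              rw [hpow]
          _ = toComplex q * (Complex.I ^ m * (Complex.I ^ (k + 3 * m) * toComplex β)) := by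
              ring
      exact ih β.norm.natAbs hnβ β rfl hβ0 (k + 3 * m) hk'

end Stmt11Aux

/-- Every coincidence rotation of the square lattice, i.e. every `z ∈ ℚ(i)` with `|z| = 1`,
is a power of `i` times `α/ᾱ` for some Gaussian integer `α ≠ 0` all of whose prime factors
lie above rational primes `p ≡ 1 (mod 4)`. -/
theorem stmt11 (a b : ℚ) (z : ℂ) (hz : z = (a : ℂ) + (b : ℂ) * Complex.I)
    (habs : ‖z‖ = 1) :
    ∃ (k : ℕ) (α : GaussianInt), α ≠ 0 ∧
      (∀ q : GaussianInt, Prime q → q ∣ α →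
        ∃ p : ℕ, p.Prime ∧ p % 4 = 1 ∧ q ∣ (p : GaussianInt)) ∧
      z * GaussianInt.toComplex (star α) = Complex.I ^ k * GaussianInt.toComplex α := by
  have hzz : z * (starRingEnd ℂ) z = 1 := by
    rw [Complex.mul_conj, Complex.normSq_eq_norm_sq, habs]
    norm_num
  by_cases hz1 : z = -1
  · refine ⟨2, 1, one_ne_zero, fun q hq hd => absurd (isUnit_of_dvd_one hd) hq.not_isUnit, ?_⟩
    rw [hz1]
    simp [Complex.I_sq]
  · set d : ℕ := a.den * b.den with hd
    set c : GaussianInt := ⟨a.num * b.den, b.num * a.den⟩ with hc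
    have hd0 : (d : ℂ) ≠ 0 := by
      simp [hd, a.den_nz, b.den_nz]
    have ha : (a.num : ℂ) = a * a.den := by
      rw [Rat.cast_def]
      field_simp
    have hb : (b.num : ℂ) = b * b.den := by
      rw [Rat.cast_def]
      field_simp
    have hcd : GaussianInt.toComplex c = d * z := by
      rw [hc, toComplex_def', hz, hd]
      push_cast
      linear_combination (b.den : ℂ) * ha + ((a.den : ℂ) * Complex.I) * hb
    set α : GaussianInt := c + (d : GaussianInt) with hα
    have hαc : GaussianInt.toComplex α = d * z + d := by
      rw [hα, map_add, hcd, map_natCast]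
    have hα0 : α ≠ 0 := by
      intro h
      have : GaussianInt.toComplex α = 0 := by rw [h, map_zero]
      rw [hαc] at this
      have : (d : ℂ) * (z + 1) = 0 := by linear_combination this
      rcases mul_eq_zero.mp this with h' | h'
      · exact hd0 h'
      · exact hz1 (by linear_combination h')
    have heq : z * GaussianInt.toComplex (star α) = Complex.I ^ 0 * GaussianInt.toComplex α := by
      rw [pow_zero, one_mul, GaussianInt.toComplex_star, hαc]
      rw [map_add, map_mul]
      simp only [Complex.conj_natCast]
      calc z * ((d : ℂ) * (starRingEnd ℂ) z + d)
          = (d : ℂ) * (z * (starRingEnd ℂ) z) + d * z := by ring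
        _ = (d : ℂ) * z + d := by rw [hzz]; ring
    exact Stmt11Aux.key z α.norm.natAbs α rfl hα0 0 heq
end

section
/- For the square lattice ℤ², the coincidence index of a rotation z = α/β (α, β coprime Gaussian integers of equal norm) equals the norm N(α) = |α|², and it is always an odd integer all of whose prime factors are ≡ 1 (mod 4). -/
open Zsqrtd

noncomputable section AuxGI

/-- `ℤ[i] ≃+ (Fin 2 → ℤ)`. -/
def giEquiv : GaussianInt ≃+ (Fin 2 → ℤ) where
  toFun x := ![x.re, x.im]
  invFun v := ⟨v 0, v 1⟩
  left_inv x := by simp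
  right_inv v := by ext i; fin_cases i <;> simp
  map_add' x y := by funext i; fin_cases i <;> simp [Zsqrtd.add_def]

/-- The standard `ℤ`-basis `1, i` of the Gaussian integers. -/
def giBasis : Module.Basis (Fin 2) ℤ GaussianInt := Module.Basis.ofEquivFun giEquiv.toIntLinearEquiv

instance : Module.Free ℤ GaussianInt := Module.Free.of_basis giBasis
instance : Module.Finite ℤ GaussianInt := Module.Finite.of_basis giBasis

lemma algNorm_eq (x : GaussianInt) : Algebra.norm ℤ x = x.norm := by
  rw [Algebra.norm_eq_matrix_det giBasis, Matrix.det_fin_two]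
  simp [Algebra.leftMulMatrix_eq_repr_mul, giBasis, giEquiv, Zsqrtd.norm_def, Zsqrtd.re_mul,
    Zsqrtd.im_mul]

lemma span_index_eq (α : GaussianInt) :
    ((Ideal.span {α} : Ideal GaussianInt).toAddSubgroup).index = α.norm.natAbs := by
  have h1 : ((Ideal.span {α} : Ideal GaussianInt).toAddSubgroup).index
      = Nat.card (GaussianInt ⧸ (Ideal.span {α} : Ideal GaussianInt)) := rfl
  rw [h1, ← Submodule.cardQuot_apply, ← Ideal.absNorm_apply, Ideal.absNorm_span_singleton,
    algNorm_eq]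

lemma one_add_i_dvd_of_two_dvd_norm {x : GaussianInt} (h2 : (2:ℤ) ∣ x.norm) :
    (⟨1,1⟩ : GaussianInt) ∣ x := by
  have hnorm : x.norm = x.re * x.re + x.im * x.im := by
    rw [Zsqrtd.norm_def]; ring
  have heven : Even (x.re * x.re + x.im * x.im) := by
    rw [← hnorm]; exact even_iff_two_dvd.mpr h2
  have h1 : Even (x.re + x.im) := by
    rw [Int.even_add]
    rw [Int.even_add, Int.even_mul, Int.even_mul, or_self, or_self] at heven
    exact heven
  obtain ⟨k, hk⟩ := h1
  refine ⟨⟨k, x.im - k⟩, ?_⟩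
  ext <;> simp [Zsqrtd.re_mul, Zsqrtd.im_mul] <;> omega

lemma not_unit_one_add_i : ¬ IsUnit (⟨1,1⟩ : GaussianInt) := by
  intro h
  have := Zsqrtd.norm_eq_one_iff.mpr h
  simp [Zsqrtd.norm_def] at this

lemma inert_dvd {p : ℕ} (hp : p.Prime) (h3 : p % 4 = 3) {x : GaussianInt}
    (hdvd : (p:ℤ) ∣ x.norm) : (p:GaussianInt) ∣ x := by
  haveI := Fact.mk hp
  have hprime : Prime (p : GaussianInt) :=
    GaussianInt.prime_of_nat_prime_of_mod_four_eq_three p h3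
  have hd : (p : GaussianInt) ∣ x * star x := by
    rw [← Zsqrtd.norm_eq_mul_conj]
    have : ((p:ℤ) : GaussianInt) ∣ ((x.norm : ℤ) : GaussianInt) := by
      simpa using map_dvd (Int.castRingHom GaussianInt) hdvd
    simpa using this
  rcases hprime.2.2 _ _ hd with h | h
  · exact h
  · obtain ⟨c, hc⟩ := h
    refine ⟨star c, ?_⟩
    have := congrArg star hc
    simpa [mul_comm] using this

end AuxGI

/-- The square lattice `ℤ² ≅ ℤ[i]`, realized as an additive subgroup of `ℂ`. -/
noncomputable def Zi : AddSubgroup ℂ := GaussianInt.toComplex.toAddMonoidHom.range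

/-- For the square lattice, the coincidence index of a rotation `z = α/β` (with `α, β` coprime
Gaussian integers of equal norm) equals `N(α) = |α|²`, and it is odd with all prime factors
`≡ 1 (mod 4)`. -/
theorem stmt12 (α β : GaussianInt) (hco : IsCoprime α β) (hβ : β ≠ 0)
    (hnorm : α.norm = β.norm) (z : ℂ)
    (hz : z = GaussianInt.toComplex α / GaussianInt.toComplex β) :
    (Zi ⊓ Zi.map (AddMonoidHom.mulLeft z)).relIndex Zi = α.norm.natAbs ∧
    Odd α.norm.natAbs ∧
    (∀ p : ℕ, p.Prime → p ∣ α.norm.natAbs → p % 4 = 1) := by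
  -- Part 1: the index computation.
  have hindex : (Zi ⊓ Zi.map (AddMonoidHom.mulLeft z)).relIndex Zi = α.norm.natAbs := by
    set f := GaussianInt.toComplex.toAddMonoidHom with hf
    have hfa : ∀ x : GaussianInt, f x = GaussianInt.toComplex x := fun _ => rfl
    have hinj : Function.Injective f := GaussianInt.toComplex_injective
    have hβC : GaussianInt.toComplex β ≠ 0 := by
      simpa [GaussianInt.toComplex_eq_zero] using hβ
    set J := AddSubgroup.map f ((Ideal.span {α} : Ideal GaussianInt).toAddSubgroup) with hJ
    have hsub : Zi ⊓ Zi.map (AddMonoidHom.mulLeft z) = J := by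
      ext x
      constructor
      · rintro ⟨⟨γ, rfl⟩, ⟨-, ⟨δ, rfl⟩, hδ⟩⟩
        simp only [AddMonoidHom.coe_mulLeft] at hδ
        have hmul : GaussianInt.toComplex (β * γ) = GaussianInt.toComplex (α * δ) := by
          rw [GaussianInt.toComplex_mul, GaussianInt.toComplex_mul]
          have hδ' : z * GaussianInt.toComplex δ = GaussianInt.toComplex γ := hδ
          rw [hz, div_mul_eq_mul_div, div_eq_iff hβC] at hδ'
          linear_combination -hδ'
        have hdvd : α ∣ β * γ := (GaussianInt.toComplex_inj.mp hmul) ▸ Dvd.intro δ rfl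
        have : α ∣ γ := hco.dvd_of_dvd_mul_left hdvd
        exact ⟨γ, Ideal.mem_span_singleton.mpr this, rfl⟩
      · rintro ⟨γ, hγ, rfl⟩
        obtain ⟨c, rfl⟩ := Ideal.mem_span_singleton.mp hγ
        refine ⟨⟨α * c, rfl⟩, ⟨f (β * c), ⟨β * c, rfl⟩, ?_⟩⟩
        simp only [AddMonoidHom.coe_mulLeft, hfa, GaussianInt.toComplex_mul, hz]
        field_simp
    rw [hsub]
    set e : GaussianInt ≃+ Zi := AddMonoidHom.ofInjective hinj with he
    have hcomap : (J.addSubgroupOf Zi).comap e.toAddMonoidHom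
        = (Ideal.span {α} : Ideal GaussianInt).toAddSubgroup := by
      ext γ
      simp only [AddSubgroup.mem_comap, AddSubgroup.mem_addSubgroupOf,
        AddEquiv.coe_toAddMonoidHom]
      have : ((e γ : Zi) : ℂ) = f γ := by rw [he]; exact AddMonoidHom.ofInjective_apply hinj
      rw [this]
      constructor
      · rintro ⟨δ, hδ, hfd⟩
        rwa [← hinj hfd]
      · intro h; exact ⟨γ, h, rfl⟩
    have := AddSubgroup.index_comap_of_surjective (J.addSubgroupOf Zi)
      (f := e.toAddMonoidHom) e.surjective
    rw [AddSubgroup.relIndex, ← this, hcomap, span_index_eq]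
  -- Part 2: oddness.
  have hodd : Odd α.norm.natAbs := by
    rw [Nat.odd_iff]
    by_contra h2'
    have h2 : 2 ∣ α.norm.natAbs := by omega
    have h2α : (2:ℤ) ∣ α.norm := Int.natAbs_dvd_natAbs.mp (by simpa using h2)
    have h2β : (2:ℤ) ∣ β.norm := hnorm ▸ h2α
    exact not_unit_one_add_i
      (hco.isUnit_of_dvd' (one_add_i_dvd_of_two_dvd_norm h2α)
        (one_add_i_dvd_of_two_dvd_norm h2β))
  refine ⟨hindex, hodd, fun p hp hpdvd => ?_⟩
  -- Part 3: all prime factors are 1 mod 4.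
  have hpα : (p:ℤ) ∣ α.norm := Int.natAbs_dvd_natAbs.mp (by simpa using hpdvd)
  have hpβ : (p:ℤ) ∣ β.norm := hnorm ▸ hpα
  have hpodd : p % 2 = 1 := by
    have hne : p ≠ 2 := by
      rintro rfl
      rw [Nat.odd_iff] at hodd
      omega
    exact Nat.odd_iff.mp (hp.odd_of_ne_two hne)
  have hp3 : p % 4 ≠ 3 := by
    intro h3
    have hα : (p:GaussianInt) ∣ α := inert_dvd hp h3 hpα
    have hβ' : (p:GaussianInt) ∣ β := inert_dvd hp h3 hpβ
    haveI := Fact.mk hp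
    exact (GaussianInt.prime_of_nat_prime_of_mod_four_eq_three p h3).not_unit
      (hco.isUnit_of_dvd' hα hβ')
  have := Nat.mod_mod_of_dvd p (by norm_num : 2 ∣ 4)
  omega
end

section
/- For a primitive integer quaternion q = (κ,λ,μ,ν) (gcd 1), the coincidence index of the associated Cayley rotation R(q) ∈ SO(3,ℚ) on the lattice ℤ³ equals the denominator den(R(q)), which is the odd part |q|²/2^ℓ of the norm |q|² = κ²+λ²+μ²+ν², where 2^ℓ is the largest power of 2 dividing |q|². -/
/-- Cayley's parametrization of a rotation by a quaternion `(κ,λ,μ,ν)`. -/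
noncomputable def cayley (k l m n : ℤ) : Matrix (Fin 3) (Fin 3) ℝ :=
  ((k : ℝ)^2 + (l : ℝ)^2 + (m : ℝ)^2 + (n : ℝ)^2)⁻¹ •
  !![(k : ℝ)^2 + (l : ℝ)^2 - (m : ℝ)^2 - (n : ℝ)^2,
       -2*(k : ℝ)*(n : ℝ) + 2*(l : ℝ)*(m : ℝ), 2*(k : ℝ)*(m : ℝ) + 2*(l : ℝ)*(n : ℝ);
     2*(k : ℝ)*(n : ℝ) + 2*(l : ℝ)*(m : ℝ),
       (k : ℝ)^2 - (l : ℝ)^2 + (m : ℝ)^2 - (n : ℝ)^2,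
       -2*(k : ℝ)*(l : ℝ) + 2*(m : ℝ)*(n : ℝ);
     -2*(k : ℝ)*(m : ℝ) + 2*(l : ℝ)*(n : ℝ), 2*(k : ℝ)*(l : ℝ) + 2*(m : ℝ)*(n : ℝ),
       (k : ℝ)^2 - (l : ℝ)^2 - (m : ℝ)^2 + (n : ℝ)^2]

open Matrix

namespace S13

set_option maxHeartbeats 1000000

/-- integer Cayley matrix -/
def Mq (k l m n : ℤ) : Matrix (Fin 3) (Fin 3) ℤ :=
  !![k^2 + l^2 - m^2 - n^2, -2*k*n + 2*l*m, 2*k*m + 2*l*n;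
     2*k*n + 2*l*m, k^2 - l^2 + m^2 - n^2, -2*k*l + 2*m*n;
     -2*k*m + 2*l*n, 2*k*l + 2*m*n, k^2 - l^2 - m^2 + n^2]

section identities
variable (k l m n : ℤ)

lemma Mq_mul_transpose :
    Mq k l m n * (Mq k l m n)ᵀ = ((k^2+l^2+m^2+n^2)^2) • (1 : Matrix (Fin 3) (Fin 3) ℤ) := by
  ext i j
  fin_cases i <;> fin_cases j <;>
    simp only [Matrix.mul_apply, Matrix.transpose_apply, Fin.sum_univ_three, Mq,
      Matrix.smul_apply, Matrix.one_apply, Matrix.cons_val', Matrix.cons_val_zero,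
      Matrix.cons_val_one, Matrix.head_cons, Matrix.empty_val', Matrix.cons_val_fin_one,
      Matrix.head_fin_const, Matrix.cons_val_two, Matrix.tail_cons, Matrix.of_apply] <;>
    norm_num [Fin.ext_iff] <;> ring

lemma transpose_mul_Mq :
    (Mq k l m n)ᵀ * Mq k l m n = ((k^2+l^2+m^2+n^2)^2) • (1 : Matrix (Fin 3) (Fin 3) ℤ) := by
  ext i j
  fin_cases i <;> fin_cases j <;>
    simp only [Matrix.mul_apply, Matrix.transpose_apply, Fin.sum_univ_three, Mq,
      Matrix.smul_apply, Matrix.one_apply, Matrix.cons_val', Matrix.cons_val_zero,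
      Matrix.cons_val_one, Matrix.head_cons, Matrix.empty_val', Matrix.cons_val_fin_one,
      Matrix.head_fin_const, Matrix.cons_val_two, Matrix.tail_cons, Matrix.of_apply] <;>
    norm_num [Fin.ext_iff] <;> ring

set_option maxHeartbeats 4000000 in
/-- all 2x2 minors of Mq are divisible by the norm -/
lemma minor_dvd : ∀ i j i' j' : Fin 3,
    (k^2+l^2+m^2+n^2) ∣
      (Mq k l m n i j * Mq k l m n i' j' - Mq k l m n i j' * Mq k l m n i' j) := by
  intro i j i' j'
  fin_cases i <;> fin_cases j <;> fin_cases i' <;> fin_cases j'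
  exact ⟨0, by show ((k^2 + l^2 - m^2 - n^2) * (k^2 + l^2 - m^2 - n^2) - (k^2 + l^2 - m^2 - n^2) * (k^2 + l^2 - m^2 - n^2) : ℤ) = (k^2+l^2+m^2+n^2) * (0); ring⟩
  exact ⟨0, by show ((k^2 + l^2 - m^2 - n^2) * (-2*k*n + 2*l*m) - (-2*k*n + 2*l*m) * (k^2 + l^2 - m^2 - n^2) : ℤ) = (k^2+l^2+m^2+n^2) * (0); ring⟩
  exact ⟨0, by show ((k^2 + l^2 - m^2 - n^2) * (2*k*m + 2*l*n) - (2*k*m + 2*l*n) * (k^2 + l^2 - m^2 - n^2) : ℤ) = (k^2+l^2+m^2+n^2) * (0); ring⟩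
  exact ⟨0, by show ((k^2 + l^2 - m^2 - n^2) * (2*k*n + 2*l*m) - (k^2 + l^2 - m^2 - n^2) * (2*k*n + 2*l*m) : ℤ) = (k^2+l^2+m^2+n^2) * (0); ring⟩
  exact ⟨k^2 - l^2 - m^2 + n^2, by show ((k^2 + l^2 - m^2 - n^2) * (k^2 - l^2 + m^2 - n^2) - (-2*k*n + 2*l*m) * (2*k*n + 2*l*m) : ℤ) = (k^2+l^2+m^2+n^2) * (k^2 - l^2 - m^2 + n^2); ring⟩
  exact ⟨-2*k*l - 2*m*n, by show ((k^2 + l^2 - m^2 - n^2) * (-2*k*l + 2*m*n) - (2*k*m + 2*l*n) * (2*k*n + 2*l*m) : ℤ) = (k^2+l^2+m^2+n^2) * (-2*k*l - 2*m*n); ring⟩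
  exact ⟨0, by show ((k^2 + l^2 - m^2 - n^2) * (-2*k*m + 2*l*n) - (k^2 + l^2 - m^2 - n^2) * (-2*k*m + 2*l*n) : ℤ) = (k^2+l^2+m^2+n^2) * (0); ring⟩
  exact ⟨2*k*l - 2*m*n, by show ((k^2 + l^2 - m^2 - n^2) * (2*k*l + 2*m*n) - (-2*k*n + 2*l*m) * (-2*k*m + 2*l*n) : ℤ) = (k^2+l^2+m^2+n^2) * (2*k*l - 2*m*n); ring⟩
  exact ⟨k^2 - l^2 + m^2 - n^2, by show ((k^2 + l^2 - m^2 - n^2) * (k^2 - l^2 - m^2 + n^2) - (2*k*m + 2*l*n) * (-2*k*m + 2*l*n) : ℤ) = (k^2+l^2+m^2+n^2) * (k^2 - l^2 + m^2 - n^2); ring⟩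
  exact ⟨0, by show ((-2*k*n + 2*l*m) * (k^2 + l^2 - m^2 - n^2) - (k^2 + l^2 - m^2 - n^2) * (-2*k*n + 2*l*m) : ℤ) = (k^2+l^2+m^2+n^2) * (0); ring⟩
  exact ⟨0, by show ((-2*k*n + 2*l*m) * (-2*k*n + 2*l*m) - (-2*k*n + 2*l*m) * (-2*k*n + 2*l*m) : ℤ) = (k^2+l^2+m^2+n^2) * (0); ring⟩
  exact ⟨0, by show ((-2*k*n + 2*l*m) * (2*k*m + 2*l*n) - (2*k*m + 2*l*n) * (-2*k*n + 2*l*m) : ℤ) = (k^2+l^2+m^2+n^2) * (0); ring⟩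
  exact ⟨-k^2 + l^2 + m^2 - n^2, by show ((-2*k*n + 2*l*m) * (2*k*n + 2*l*m) - (k^2 + l^2 - m^2 - n^2) * (k^2 - l^2 + m^2 - n^2) : ℤ) = (k^2+l^2+m^2+n^2) * (-k^2 + l^2 + m^2 - n^2); ring⟩
  exact ⟨0, by show ((-2*k*n + 2*l*m) * (k^2 - l^2 + m^2 - n^2) - (-2*k*n + 2*l*m) * (k^2 - l^2 + m^2 - n^2) : ℤ) = (k^2+l^2+m^2+n^2) * (0); ring⟩
  exact ⟨-2*k*m + 2*l*n, by show ((-2*k*n + 2*l*m) * (-2*k*l + 2*m*n) - (2*k*m + 2*l*n) * (k^2 - l^2 + m^2 - n^2) : ℤ) = (k^2+l^2+m^2+n^2) * (-2*k*m + 2*l*n); ring⟩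
  exact ⟨-2*k*l + 2*m*n, by show ((-2*k*n + 2*l*m) * (-2*k*m + 2*l*n) - (k^2 + l^2 - m^2 - n^2) * (2*k*l + 2*m*n) : ℤ) = (k^2+l^2+m^2+n^2) * (-2*k*l + 2*m*n); ring⟩
  exact ⟨0, by show ((-2*k*n + 2*l*m) * (2*k*l + 2*m*n) - (-2*k*n + 2*l*m) * (2*k*l + 2*m*n) : ℤ) = (k^2+l^2+m^2+n^2) * (0); ring⟩
  exact ⟨-2*k*n - 2*l*m, by show ((-2*k*n + 2*l*m) * (k^2 - l^2 - m^2 + n^2) - (2*k*m + 2*l*n) * (2*k*l + 2*m*n) : ℤ) = (k^2+l^2+m^2+n^2) * (-2*k*n - 2*l*m); ring⟩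
  exact ⟨0, by show ((2*k*m + 2*l*n) * (k^2 + l^2 - m^2 - n^2) - (k^2 + l^2 - m^2 - n^2) * (2*k*m + 2*l*n) : ℤ) = (k^2+l^2+m^2+n^2) * (0); ring⟩
  exact ⟨0, by show ((2*k*m + 2*l*n) * (-2*k*n + 2*l*m) - (-2*k*n + 2*l*m) * (2*k*m + 2*l*n) : ℤ) = (k^2+l^2+m^2+n^2) * (0); ring⟩
  exact ⟨0, by show ((2*k*m + 2*l*n) * (2*k*m + 2*l*n) - (2*k*m + 2*l*n) * (2*k*m + 2*l*n) : ℤ) = (k^2+l^2+m^2+n^2) * (0); ring⟩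
  exact ⟨2*k*l + 2*m*n, by show ((2*k*m + 2*l*n) * (2*k*n + 2*l*m) - (k^2 + l^2 - m^2 - n^2) * (-2*k*l + 2*m*n) : ℤ) = (k^2+l^2+m^2+n^2) * (2*k*l + 2*m*n); ring⟩
  exact ⟨2*k*m - 2*l*n, by show ((2*k*m + 2*l*n) * (k^2 - l^2 + m^2 - n^2) - (-2*k*n + 2*l*m) * (-2*k*l + 2*m*n) : ℤ) = (k^2+l^2+m^2+n^2) * (2*k*m - 2*l*n); ring⟩
  exact ⟨0, by show ((2*k*m + 2*l*n) * (-2*k*l + 2*m*n) - (2*k*m + 2*l*n) * (-2*k*l + 2*m*n) : ℤ) = (k^2+l^2+m^2+n^2) * (0); ring⟩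
  exact ⟨-k^2 + l^2 - m^2 + n^2, by show ((2*k*m + 2*l*n) * (-2*k*m + 2*l*n) - (k^2 + l^2 - m^2 - n^2) * (k^2 - l^2 - m^2 + n^2) : ℤ) = (k^2+l^2+m^2+n^2) * (-k^2 + l^2 - m^2 + n^2); ring⟩
  exact ⟨2*k*n + 2*l*m, by show ((2*k*m + 2*l*n) * (2*k*l + 2*m*n) - (-2*k*n + 2*l*m) * (k^2 - l^2 - m^2 + n^2) : ℤ) = (k^2+l^2+m^2+n^2) * (2*k*n + 2*l*m); ring⟩
  exact ⟨0, by show ((2*k*m + 2*l*n) * (k^2 - l^2 - m^2 + n^2) - (2*k*m + 2*l*n) * (k^2 - l^2 - m^2 + n^2) : ℤ) = (k^2+l^2+m^2+n^2) * (0); ring⟩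
  exact ⟨0, by show ((2*k*n + 2*l*m) * (k^2 + l^2 - m^2 - n^2) - (2*k*n + 2*l*m) * (k^2 + l^2 - m^2 - n^2) : ℤ) = (k^2+l^2+m^2+n^2) * (0); ring⟩
  exact ⟨-k^2 + l^2 + m^2 - n^2, by show ((2*k*n + 2*l*m) * (-2*k*n + 2*l*m) - (k^2 - l^2 + m^2 - n^2) * (k^2 + l^2 - m^2 - n^2) : ℤ) = (k^2+l^2+m^2+n^2) * (-k^2 + l^2 + m^2 - n^2); ring⟩
  exact ⟨2*k*l + 2*m*n, by show ((2*k*n + 2*l*m) * (2*k*m + 2*l*n) - (-2*k*l + 2*m*n) * (k^2 + l^2 - m^2 - n^2) : ℤ) = (k^2+l^2+m^2+n^2) * (2*k*l + 2*m*n); ring⟩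
  exact ⟨0, by show ((2*k*n + 2*l*m) * (2*k*n + 2*l*m) - (2*k*n + 2*l*m) * (2*k*n + 2*l*m) : ℤ) = (k^2+l^2+m^2+n^2) * (0); ring⟩
  exact ⟨0, by show ((2*k*n + 2*l*m) * (k^2 - l^2 + m^2 - n^2) - (k^2 - l^2 + m^2 - n^2) * (2*k*n + 2*l*m) : ℤ) = (k^2+l^2+m^2+n^2) * (0); ring⟩
  exact ⟨0, by show ((2*k*n + 2*l*m) * (-2*k*l + 2*m*n) - (-2*k*l + 2*m*n) * (2*k*n + 2*l*m) : ℤ) = (k^2+l^2+m^2+n^2) * (0); ring⟩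
  exact ⟨0, by show ((2*k*n + 2*l*m) * (-2*k*m + 2*l*n) - (2*k*n + 2*l*m) * (-2*k*m + 2*l*n) : ℤ) = (k^2+l^2+m^2+n^2) * (0); ring⟩
  exact ⟨2*k*m + 2*l*n, by show ((2*k*n + 2*l*m) * (2*k*l + 2*m*n) - (k^2 - l^2 + m^2 - n^2) * (-2*k*m + 2*l*n) : ℤ) = (k^2+l^2+m^2+n^2) * (2*k*m + 2*l*n); ring⟩
  exact ⟨2*k*n - 2*l*m, by show ((2*k*n + 2*l*m) * (k^2 - l^2 - m^2 + n^2) - (-2*k*l + 2*m*n) * (-2*k*m + 2*l*n) : ℤ) = (k^2+l^2+m^2+n^2) * (2*k*n - 2*l*m); ring⟩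
  exact ⟨k^2 - l^2 - m^2 + n^2, by show ((k^2 - l^2 + m^2 - n^2) * (k^2 + l^2 - m^2 - n^2) - (2*k*n + 2*l*m) * (-2*k*n + 2*l*m) : ℤ) = (k^2+l^2+m^2+n^2) * (k^2 - l^2 - m^2 + n^2); ring⟩
  exact ⟨0, by show ((k^2 - l^2 + m^2 - n^2) * (-2*k*n + 2*l*m) - (k^2 - l^2 + m^2 - n^2) * (-2*k*n + 2*l*m) : ℤ) = (k^2+l^2+m^2+n^2) * (0); ring⟩
  exact ⟨2*k*m - 2*l*n, by show ((k^2 - l^2 + m^2 - n^2) * (2*k*m + 2*l*n) - (-2*k*l + 2*m*n) * (-2*k*n + 2*l*m) : ℤ) = (k^2+l^2+m^2+n^2) * (2*k*m - 2*l*n); ring⟩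
  exact ⟨0, by show ((k^2 - l^2 + m^2 - n^2) * (2*k*n + 2*l*m) - (2*k*n + 2*l*m) * (k^2 - l^2 + m^2 - n^2) : ℤ) = (k^2+l^2+m^2+n^2) * (0); ring⟩
  exact ⟨0, by show ((k^2 - l^2 + m^2 - n^2) * (k^2 - l^2 + m^2 - n^2) - (k^2 - l^2 + m^2 - n^2) * (k^2 - l^2 + m^2 - n^2) : ℤ) = (k^2+l^2+m^2+n^2) * (0); ring⟩
  exact ⟨0, by show ((k^2 - l^2 + m^2 - n^2) * (-2*k*l + 2*m*n) - (-2*k*l + 2*m*n) * (k^2 - l^2 + m^2 - n^2) : ℤ) = (k^2+l^2+m^2+n^2) * (0); ring⟩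
  exact ⟨-2*k*m - 2*l*n, by show ((k^2 - l^2 + m^2 - n^2) * (-2*k*m + 2*l*n) - (2*k*n + 2*l*m) * (2*k*l + 2*m*n) : ℤ) = (k^2+l^2+m^2+n^2) * (-2*k*m - 2*l*n); ring⟩
  exact ⟨0, by show ((k^2 - l^2 + m^2 - n^2) * (2*k*l + 2*m*n) - (k^2 - l^2 + m^2 - n^2) * (2*k*l + 2*m*n) : ℤ) = (k^2+l^2+m^2+n^2) * (0); ring⟩
  exact ⟨k^2 + l^2 - m^2 - n^2, by show ((k^2 - l^2 + m^2 - n^2) * (k^2 - l^2 - m^2 + n^2) - (-2*k*l + 2*m*n) * (2*k*l + 2*m*n) : ℤ) = (k^2+l^2+m^2+n^2) * (k^2 + l^2 - m^2 - n^2); ring⟩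
  exact ⟨-2*k*l - 2*m*n, by show ((-2*k*l + 2*m*n) * (k^2 + l^2 - m^2 - n^2) - (2*k*n + 2*l*m) * (2*k*m + 2*l*n) : ℤ) = (k^2+l^2+m^2+n^2) * (-2*k*l - 2*m*n); ring⟩
  exact ⟨-2*k*m + 2*l*n, by show ((-2*k*l + 2*m*n) * (-2*k*n + 2*l*m) - (k^2 - l^2 + m^2 - n^2) * (2*k*m + 2*l*n) : ℤ) = (k^2+l^2+m^2+n^2) * (-2*k*m + 2*l*n); ring⟩
  exact ⟨0, by show ((-2*k*l + 2*m*n) * (2*k*m + 2*l*n) - (-2*k*l + 2*m*n) * (2*k*m + 2*l*n) : ℤ) = (k^2+l^2+m^2+n^2) * (0); ring⟩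
  exact ⟨0, by show ((-2*k*l + 2*m*n) * (2*k*n + 2*l*m) - (2*k*n + 2*l*m) * (-2*k*l + 2*m*n) : ℤ) = (k^2+l^2+m^2+n^2) * (0); ring⟩
  exact ⟨0, by show ((-2*k*l + 2*m*n) * (k^2 - l^2 + m^2 - n^2) - (k^2 - l^2 + m^2 - n^2) * (-2*k*l + 2*m*n) : ℤ) = (k^2+l^2+m^2+n^2) * (0); ring⟩
  exact ⟨0, by show ((-2*k*l + 2*m*n) * (-2*k*l + 2*m*n) - (-2*k*l + 2*m*n) * (-2*k*l + 2*m*n) : ℤ) = (k^2+l^2+m^2+n^2) * (0); ring⟩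
  exact ⟨-2*k*n + 2*l*m, by show ((-2*k*l + 2*m*n) * (-2*k*m + 2*l*n) - (2*k*n + 2*l*m) * (k^2 - l^2 - m^2 + n^2) : ℤ) = (k^2+l^2+m^2+n^2) * (-2*k*n + 2*l*m); ring⟩
  exact ⟨-k^2 - l^2 + m^2 + n^2, by show ((-2*k*l + 2*m*n) * (2*k*l + 2*m*n) - (k^2 - l^2 + m^2 - n^2) * (k^2 - l^2 - m^2 + n^2) : ℤ) = (k^2+l^2+m^2+n^2) * (-k^2 - l^2 + m^2 + n^2); ring⟩
  exact ⟨0, by show ((-2*k*l + 2*m*n) * (k^2 - l^2 - m^2 + n^2) - (-2*k*l + 2*m*n) * (k^2 - l^2 - m^2 + n^2) : ℤ) = (k^2+l^2+m^2+n^2) * (0); ring⟩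
  exact ⟨0, by show ((-2*k*m + 2*l*n) * (k^2 + l^2 - m^2 - n^2) - (-2*k*m + 2*l*n) * (k^2 + l^2 - m^2 - n^2) : ℤ) = (k^2+l^2+m^2+n^2) * (0); ring⟩
  exact ⟨-2*k*l + 2*m*n, by show ((-2*k*m + 2*l*n) * (-2*k*n + 2*l*m) - (2*k*l + 2*m*n) * (k^2 + l^2 - m^2 - n^2) : ℤ) = (k^2+l^2+m^2+n^2) * (-2*k*l + 2*m*n); ring⟩
  exact ⟨-k^2 + l^2 - m^2 + n^2, by show ((-2*k*m + 2*l*n) * (2*k*m + 2*l*n) - (k^2 - l^2 - m^2 + n^2) * (k^2 + l^2 - m^2 - n^2) : ℤ) = (k^2+l^2+m^2+n^2) * (-k^2 + l^2 - m^2 + n^2); ring⟩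
  exact ⟨0, by show ((-2*k*m + 2*l*n) * (2*k*n + 2*l*m) - (-2*k*m + 2*l*n) * (2*k*n + 2*l*m) : ℤ) = (k^2+l^2+m^2+n^2) * (0); ring⟩
  exact ⟨-2*k*m - 2*l*n, by show ((-2*k*m + 2*l*n) * (k^2 - l^2 + m^2 - n^2) - (2*k*l + 2*m*n) * (2*k*n + 2*l*m) : ℤ) = (k^2+l^2+m^2+n^2) * (-2*k*m - 2*l*n); ring⟩
  exact ⟨-2*k*n + 2*l*m, by show ((-2*k*m + 2*l*n) * (-2*k*l + 2*m*n) - (k^2 - l^2 - m^2 + n^2) * (2*k*n + 2*l*m) : ℤ) = (k^2+l^2+m^2+n^2) * (-2*k*n + 2*l*m); ring⟩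
  exact ⟨0, by show ((-2*k*m + 2*l*n) * (-2*k*m + 2*l*n) - (-2*k*m + 2*l*n) * (-2*k*m + 2*l*n) : ℤ) = (k^2+l^2+m^2+n^2) * (0); ring⟩
  exact ⟨0, by show ((-2*k*m + 2*l*n) * (2*k*l + 2*m*n) - (2*k*l + 2*m*n) * (-2*k*m + 2*l*n) : ℤ) = (k^2+l^2+m^2+n^2) * (0); ring⟩
  exact ⟨0, by show ((-2*k*m + 2*l*n) * (k^2 - l^2 - m^2 + n^2) - (k^2 - l^2 - m^2 + n^2) * (-2*k*m + 2*l*n) : ℤ) = (k^2+l^2+m^2+n^2) * (0); ring⟩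
  exact ⟨2*k*l - 2*m*n, by show ((2*k*l + 2*m*n) * (k^2 + l^2 - m^2 - n^2) - (-2*k*m + 2*l*n) * (-2*k*n + 2*l*m) : ℤ) = (k^2+l^2+m^2+n^2) * (2*k*l - 2*m*n); ring⟩
  exact ⟨0, by show ((2*k*l + 2*m*n) * (-2*k*n + 2*l*m) - (2*k*l + 2*m*n) * (-2*k*n + 2*l*m) : ℤ) = (k^2+l^2+m^2+n^2) * (0); ring⟩
  exact ⟨2*k*n + 2*l*m, by show ((2*k*l + 2*m*n) * (2*k*m + 2*l*n) - (k^2 - l^2 - m^2 + n^2) * (-2*k*n + 2*l*m) : ℤ) = (k^2+l^2+m^2+n^2) * (2*k*n + 2*l*m); ring⟩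
  exact ⟨2*k*m + 2*l*n, by show ((2*k*l + 2*m*n) * (2*k*n + 2*l*m) - (-2*k*m + 2*l*n) * (k^2 - l^2 + m^2 - n^2) : ℤ) = (k^2+l^2+m^2+n^2) * (2*k*m + 2*l*n); ring⟩
  exact ⟨0, by show ((2*k*l + 2*m*n) * (k^2 - l^2 + m^2 - n^2) - (2*k*l + 2*m*n) * (k^2 - l^2 + m^2 - n^2) : ℤ) = (k^2+l^2+m^2+n^2) * (0); ring⟩
  exact ⟨-k^2 - l^2 + m^2 + n^2, by show ((2*k*l + 2*m*n) * (-2*k*l + 2*m*n) - (k^2 - l^2 - m^2 + n^2) * (k^2 - l^2 + m^2 - n^2) : ℤ) = (k^2+l^2+m^2+n^2) * (-k^2 - l^2 + m^2 + n^2); ring⟩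
  exact ⟨0, by show ((2*k*l + 2*m*n) * (-2*k*m + 2*l*n) - (-2*k*m + 2*l*n) * (2*k*l + 2*m*n) : ℤ) = (k^2+l^2+m^2+n^2) * (0); ring⟩
  exact ⟨0, by show ((2*k*l + 2*m*n) * (2*k*l + 2*m*n) - (2*k*l + 2*m*n) * (2*k*l + 2*m*n) : ℤ) = (k^2+l^2+m^2+n^2) * (0); ring⟩
  exact ⟨0, by show ((2*k*l + 2*m*n) * (k^2 - l^2 - m^2 + n^2) - (k^2 - l^2 - m^2 + n^2) * (2*k*l + 2*m*n) : ℤ) = (k^2+l^2+m^2+n^2) * (0); ring⟩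
  exact ⟨k^2 - l^2 + m^2 - n^2, by show ((k^2 - l^2 - m^2 + n^2) * (k^2 + l^2 - m^2 - n^2) - (-2*k*m + 2*l*n) * (2*k*m + 2*l*n) : ℤ) = (k^2+l^2+m^2+n^2) * (k^2 - l^2 + m^2 - n^2); ring⟩
  exact ⟨-2*k*n - 2*l*m, by show ((k^2 - l^2 - m^2 + n^2) * (-2*k*n + 2*l*m) - (2*k*l + 2*m*n) * (2*k*m + 2*l*n) : ℤ) = (k^2+l^2+m^2+n^2) * (-2*k*n - 2*l*m); ring⟩
  exact ⟨0, by show ((k^2 - l^2 - m^2 + n^2) * (2*k*m + 2*l*n) - (k^2 - l^2 - m^2 + n^2) * (2*k*m + 2*l*n) : ℤ) = (k^2+l^2+m^2+n^2) * (0); ring⟩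
  exact ⟨2*k*n - 2*l*m, by show ((k^2 - l^2 - m^2 + n^2) * (2*k*n + 2*l*m) - (-2*k*m + 2*l*n) * (-2*k*l + 2*m*n) : ℤ) = (k^2+l^2+m^2+n^2) * (2*k*n - 2*l*m); ring⟩
  exact ⟨k^2 + l^2 - m^2 - n^2, by show ((k^2 - l^2 - m^2 + n^2) * (k^2 - l^2 + m^2 - n^2) - (2*k*l + 2*m*n) * (-2*k*l + 2*m*n) : ℤ) = (k^2+l^2+m^2+n^2) * (k^2 + l^2 - m^2 - n^2); ring⟩
  exact ⟨0, by show ((k^2 - l^2 - m^2 + n^2) * (-2*k*l + 2*m*n) - (k^2 - l^2 - m^2 + n^2) * (-2*k*l + 2*m*n) : ℤ) = (k^2+l^2+m^2+n^2) * (0); ring⟩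
  exact ⟨0, by show ((k^2 - l^2 - m^2 + n^2) * (-2*k*m + 2*l*n) - (-2*k*m + 2*l*n) * (k^2 - l^2 - m^2 + n^2) : ℤ) = (k^2+l^2+m^2+n^2) * (0); ring⟩
  exact ⟨0, by show ((k^2 - l^2 - m^2 + n^2) * (2*k*l + 2*m*n) - (2*k*l + 2*m*n) * (k^2 - l^2 - m^2 + n^2) : ℤ) = (k^2+l^2+m^2+n^2) * (0); ring⟩
  exact ⟨0, by show ((k^2 - l^2 - m^2 + n^2) * (k^2 - l^2 - m^2 + n^2) - (k^2 - l^2 - m^2 + n^2) * (k^2 - l^2 - m^2 + n^2) : ℤ) = (k^2+l^2+m^2+n^2) * (0); ring⟩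

lemma keylemma (hprim : Int.gcd (Int.gcd k l) (Int.gcd m n) = 1)
    (p : ℕ) (hp : p.Prime) (hp2 : p ≠ 2)
    (hpN : (p:ℤ) ∣ (k^2+l^2+m^2+n^2))
    (hall : ∀ i j, (p:ℤ) ∣ Mq k l m n i j) : False := by
  have hpI : Prime (p:ℤ) := Nat.prime_iff_prime_int.mp hp
  have hnd2 : ¬ (p:ℤ) ∣ 2 := by
    intro h
    have h2 : p ∣ 2 := by exact_mod_cast h
    have := Nat.le_of_dvd (by norm_num) h2
    have := hp.two_le
    omega
  have h00 : (p:ℤ) ∣ k^2 + l^2 - m^2 - n^2 := hall 0 0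
  have h11 : (p:ℤ) ∣ k^2 - l^2 + m^2 - n^2 := hall 1 1
  have h22 : (p:ℤ) ∣ k^2 - l^2 - m^2 + n^2 := hall 2 2
  have cancel2 : ∀ x : ℤ, (p:ℤ) ∣ 2 * x → (p:ℤ) ∣ x := by
    intro x hx
    rcases hpI.dvd_mul.mp hx with h | h
    · exact absurd h hnd2
    · exact h
  have hmn : (p:ℤ) ∣ m^2 + n^2 := by
    apply cancel2
    have h := dvd_sub hpN h00
    have e : (k^2+l^2+m^2+n^2) - (k^2 + l^2 - m^2 - n^2) = 2*(m^2+n^2) := by ring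
    rwa [e] at h
  have hln : (p:ℤ) ∣ l^2 + n^2 := by
    apply cancel2
    have h := dvd_sub hpN h11
    have e : (k^2+l^2+m^2+n^2) - (k^2 - l^2 + m^2 - n^2) = 2*(l^2+n^2) := by ring
    rwa [e] at h
  have hlm : (p:ℤ) ∣ l^2 + m^2 := by
    apply cancel2
    have h := dvd_sub hpN h22
    have e : (k^2+l^2+m^2+n^2) - (k^2 - l^2 - m^2 + n^2) = 2*(l^2+m^2) := by ring
    rwa [e] at h
  have hsum : (p:ℤ) ∣ l^2 + m^2 + n^2 := by
    apply cancel2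
    have h := dvd_add (dvd_add hmn hln) hlm
    have e : (m^2+n^2) + (l^2+n^2) + (l^2+m^2) = 2*(l^2+m^2+n^2) := by ring
    rwa [e] at h
  have hk2 : (p:ℤ) ∣ k^2 := by
    have h := dvd_sub hpN hsum
    have e : (k^2+l^2+m^2+n^2) - (l^2+m^2+n^2) = k^2 := by ring
    rwa [e] at h
  have hl2 : (p:ℤ) ∣ l^2 := by
    have h := dvd_sub hsum hmn
    have e : (l^2+m^2+n^2) - (m^2+n^2) = l^2 := by ring
    rwa [e] at h
  have hn2 : (p:ℤ) ∣ n^2 := by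
    have h := dvd_sub hln hl2
    have e : (l^2+n^2) - l^2 = n^2 := by ring
    rwa [e] at h
  have hm2 : (p:ℤ) ∣ m^2 := by
    have h := dvd_sub hmn hn2
    have e : (m^2+n^2) - n^2 = m^2 := by ring
    rwa [e] at h
  have hk := hpI.dvd_of_dvd_pow hk2
  have hl := hpI.dvd_of_dvd_pow hl2
  have hm := hpI.dvd_of_dvd_pow hm2
  have hn := hpI.dvd_of_dvd_pow hn2
  have habs : ∀ x : ℤ, (p:ℤ) ∣ x → p ∣ x.natAbs := by
    intro x hx
    have := Int.natAbs_dvd_natAbs.mpr hx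
    simpa using this
  have hgkl : p ∣ Int.gcd k l := Nat.dvd_gcd (habs k hk) (habs l hl)
  have hgmn : p ∣ Int.gcd m n := Nat.dvd_gcd (habs m hm) (habs n hn)
  have hprim' : Nat.gcd (Int.gcd k l) (Int.gcd m n) = 1 := by
    simpa [Int.gcd, Int.natAbs_natCast] using hprim
  have : p ∣ 1 := by
    rw [← hprim']
    exact Nat.dvd_gcd hgkl hgmn
  exact Nat.Prime.one_lt hp |>.ne' (Nat.dvd_one.mp this)

lemma sq_facts (x : ℤ) : (x % 2 = 0 ∧ x^2 % 4 = 0) ∨ (x % 2 = 1 ∧ x^2 % 8 = 1) := by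
  rcases Int.even_or_odd x with ⟨a, ha⟩ | ⟨a, ha⟩
  · left
    refine ⟨by omega, ?_⟩
    have h : x^2 = 4*a^2 := by rw [ha]; ring
    omega
  · right
    refine ⟨by omega, ?_⟩
    obtain ⟨b, hb⟩ := Int.even_mul_succ_self a
    have h : x^2 = 8*b + 1 := by rw [ha]; linear_combination (4:ℤ)*hb
    omega

end identities

/-- cast of integer-matrix action commutes with coordinatewise cast -/
lemma cast_mulVec {R : Type*} [CommRing R] (C : Matrix (Fin 3) (Fin 3) ℤ) (w : Fin 3 → ℤ) :
    (C.map (Int.cast : ℤ → R)).mulVec (fun i => ((w i : ℤ) : R))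
      = fun i => ((C.mulVec w i : ℤ) : R) := by
  funext i
  simp only [Matrix.mulVec, dotProduct, Matrix.map_apply]
  push_cast
  rfl

lemma nat_card_ker_mul_range {G H : Type*} [AddCommGroup G] [Fintype G] [AddCommGroup H]
    (f : G →+ H) : Nat.card G = Nat.card f.ker * Nat.card f.range := by
  rw [AddSubgroup.card_eq_card_quotient_mul_card_addSubgroup f.ker,
    Nat.card_congr (QuotientAddGroup.quotientKerEquivRange f).toEquiv]
  ring

lemma card_ker_functional {R : Type*} [CommRing R] [Fintype R] [DecidableEq R]
    (r : Fin 3 → R) (i₀ : Fin 3) (hu : IsUnit (r i₀)) :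
    Nat.card {x : Fin 3 → R // ∑ i, r i * x i = 0} = (Fintype.card R)^2 := by
  classical
  obtain ⟨u, hu'⟩ := hu
  set f : (Fin 3 → R) →+ R :=
    { toFun := fun x => ∑ i, r i * x i,
      map_zero' := by simp,
      map_add' := by
        intro x y
        simp [mul_add, Finset.sum_add_distrib] } with hf
  have hsurj : Function.Surjective f := by
    intro cc
    refine ⟨fun i => if i = i₀ then ((u⁻¹ : Rˣ) : R) * cc else 0, ?_⟩
    simp only [hf, AddMonoidHom.coe_mk, ZeroHom.coe_mk, mul_ite, mul_zero]
    rw [Finset.sum_ite_eq' Finset.univ i₀]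
    simp only [Finset.mem_univ, if_true, ← hu', ← mul_assoc, Units.mul_inv, one_mul]
  have hrange : Nat.card f.range = Fintype.card R := by
    have h1 : f.range = ⊤ := by
      ext y
      simpa using hsurj y
    rw [h1, Nat.card_congr AddSubgroup.topEquiv.toEquiv, Nat.card_eq_fintype_card]
  have hker : Nat.card {x : Fin 3 → R // ∑ i, r i * x i = 0} = Nat.card f.ker := by
    apply Nat.card_congr
    apply Equiv.subtypeEquivRight
    intro x
    simp [hf, AddMonoidHom.mem_ker]
  have htot : Nat.card (Fin 3 → R) = (Fintype.card R)^3 := by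
    rw [Nat.card_eq_fintype_card, Fintype.card_fun]
    norm_num
  have h := nat_card_ker_mul_range f
  rw [htot, hrange] at h
  have hpos : 0 < Fintype.card R := Fintype.card_pos
  have : (Fintype.card R)^3 = ((Fintype.card R)^2) * Fintype.card R := by ring
  rw [this] at h
  exact hker.trans ((Nat.eq_of_mul_eq_mul_right hpos h).symm)

/-- the central counting lemma: solutions of the transposed system mod e -/
lemma count_lemma (A : Matrix (Fin 3) (Fin 3) ℤ) (D : ℕ) (hDodd : Odd D)
    (hminor : ∀ i j i' j', (D:ℤ) ∣ (A i j * A i' j' - A i j' * A i' j))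
    (hpiv : ∀ p : ℕ, p.Prime → (p:ℕ) ∣ D → ∃ i j, ¬ (p:ℤ) ∣ A i j) :
    ∀ e : ℕ, e ∣ D →
      Nat.card {x : Fin 3 → ZMod e // ∀ j, ∑ i, ((A i j : ℤ) : ZMod e) * x i = 0} = e^2 := by
  have hD0 : D ≠ 0 := by rintro rfl; simp at hDodd
  intro e
  induction e using Nat.recOnPosPrimePosCoprime with
  | zero =>
    intro h
    exact absurd (Nat.eq_zero_of_zero_dvd h) hD0
  | one =>
    intro _
    have e : {x : Fin 3 → ZMod 1 // ∀ j, ∑ i, ((A i j : ℤ) : ZMod 1) * x i = 0}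
        ≃ (Fin 3 → ZMod 1) :=
      Equiv.subtypeUnivEquiv (fun x => fun j => Subsingleton.elim _ _)
    rw [Nat.card_congr e, Nat.card_eq_fintype_card, Fintype.card_fun]
    norm_num
  | prime_pow p a hp ha =>
    intro hdvd
    have hpnat : p.Prime := by first | exact hp | exact Nat.prime_iff.mpr hp
    haveI : NeZero (p^a) := ⟨pow_ne_zero a hpnat.pos.ne'⟩
    have hp2 : p ≠ 2 := by
      rintro rfl
      have : 2 ∣ D := dvd_trans (dvd_pow_self 2 ha.ne') hdvd
      rw [Nat.odd_iff] at hDodd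
      omega
    obtain ⟨i₀, j₀, hpij⟩ := hpiv p hpnat (dvd_trans (dvd_pow_self p ha.ne') hdvd)
    -- pivot is a unit mod p^a
    have hunit : IsUnit ((A i₀ j₀ : ℤ) : ZMod (p^a)) := by
      have hnd : ¬ p ∣ (A i₀ j₀).natAbs := by
        intro h
        exact hpij (Int.dvd_natAbs.mp (Int.natCast_dvd_natCast.mpr h))
      have hcop : Nat.Coprime (A i₀ j₀).natAbs (p^a) :=
        Nat.Coprime.pow_right a (Nat.coprime_comm.mp ((hpnat.coprime_iff_not_dvd).mpr hnd))
      have hu := (ZMod.isUnit_iff_coprime (A i₀ j₀).natAbs (p^a)).mpr hcop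
      rcases Int.natAbs_eq (A i₀ j₀) with h | h
      · rw [h, Int.cast_natCast]; exact hu
      · rw [h, Int.cast_neg, Int.cast_natCast]; exact hu.neg
    -- minors vanish mod p^a
    have hminor' : ∀ i j i' j',
        ((A i j : ℤ) : ZMod (p^a)) * ((A i' j' : ℤ) : ZMod (p^a))
          = ((A i j' : ℤ) : ZMod (p^a)) * ((A i' j : ℤ) : ZMod (p^a)) := by
      intro i j i' j'
      have hd : ((p^a : ℕ) : ℤ) ∣ (A i j * A i' j' - A i j' * A i' j) :=
        dvd_trans (by exact_mod_cast Int.natCast_dvd_natCast.mpr hdvd) (hminor i j i' j')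
      have := (ZMod.intCast_zmod_eq_zero_iff_dvd _ (p^a)).mpr hd
      push_cast at this
      exact sub_eq_zero.mp this
    -- the system is equivalent to a single linear equation
    have hiff : ∀ x : Fin 3 → ZMod (p^a),
        (∀ j, ∑ i, ((A i j : ℤ) : ZMod (p^a)) * x i = 0)
          ↔ (∑ i, ((A i j₀ : ℤ) : ZMod (p^a)) * x i = 0) := by
      intro x
      constructor
      · intro h; exact h j₀
      · intro h j
        have hu := hunit
        rcases hu with ⟨u, hu'⟩
        have : (u : ZMod (p^a)) * (∑ i, ((A i j : ℤ) : ZMod (p^a)) * x i)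
            = ((A i₀ j : ℤ) : ZMod (p^a)) * (∑ i, ((A i j₀ : ℤ) : ZMod (p^a)) * x i) := by
          rw [hu', Finset.mul_sum, Finset.mul_sum]
          apply Finset.sum_congr rfl
          intro i _
          rw [← mul_assoc, ← mul_assoc, mul_comm ((A i₀ j₀ : ℤ) : ZMod (p^a)), hminor' i j i₀ j₀]
          ring
        rw [h, mul_zero] at this
        have h2 : ((u⁻¹ : (ZMod (p^a))ˣ) : ZMod (p^a)) * ((u : (ZMod (p^a))ˣ) : ZMod (p^a))
            * (∑ i, ((A i j : ℤ) : ZMod (p^a)) * x i) = 0 := by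
          rw [mul_assoc, this, mul_zero]
        rwa [Units.inv_mul, one_mul] at h2
    have := card_ker_functional (fun i => ((A i j₀ : ℤ) : ZMod (p^a))) i₀ hunit
    calc Nat.card {x : Fin 3 → ZMod (p^a) // ∀ j, ∑ i, ((A i j : ℤ) : ZMod (p^a)) * x i = 0}
        = Nat.card {x : Fin 3 → ZMod (p^a) // ∑ i, ((A i j₀ : ℤ) : ZMod (p^a)) * x i = 0} := by
          apply Nat.card_congr; exact Equiv.subtypeEquivRight hiff
      _ = (Fintype.card (ZMod (p^a)))^2 := this
      _ = (p^a)^2 := by rw [ZMod.card]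
  | coprime a b ha1 hb1 hab Pa Pb =>
    intro hdvd
    have hA : a ∣ D := dvd_trans ⟨b, rfl⟩ hdvd
    have hB : b ∣ D := dvd_trans ⟨a, mul_comm a b⟩ hdvd
    have ca := Pa hA
    have cb := Pb hB
    set crt := ZMod.chineseRemainder hab with hcrt
    have key : ∀ z : ZMod (a*b), z = 0 ↔ (crt z).1 = 0 ∧ (crt z).2 = 0 := by
      intro z
      constructor
      · rintro rfl; rw [map_zero]; exact ⟨rfl, rfl⟩
      · intro ⟨h1, h2⟩
        have : crt z = 0 := by
          apply Prod.ext
          · simpa using h1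
          · simpa using h2
        have := crt.injective (this.trans (map_zero crt).symm)
        exact this
    have hfst : ∀ (x : Fin 3 → ZMod (a*b)) (j : Fin 3),
        (crt (∑ i, ((A i j : ℤ) : ZMod (a*b)) * x i)).1
          = ∑ i, ((A i j : ℤ) : ZMod a) * (crt (x i)).1 := by
      intro x j
      rw [map_sum, Prod.fst_sum]
      apply Finset.sum_congr rfl
      intro i _
      rw [_root_.map_mul]
      have h2 : (crt ((A i j : ℤ) : ZMod (a*b))).1 = ((A i j : ℤ) : ZMod a) := by
        rw [map_intCast]
        rfl
      rw [Prod.fst_mul, h2]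
    have hsnd : ∀ (x : Fin 3 → ZMod (a*b)) (j : Fin 3),
        (crt (∑ i, ((A i j : ℤ) : ZMod (a*b)) * x i)).2
          = ∑ i, ((A i j : ℤ) : ZMod b) * (crt (x i)).2 := by
      intro x j
      rw [map_sum, Prod.snd_sum]
      apply Finset.sum_congr rfl
      intro i _
      rw [_root_.map_mul]
      have h2 : (crt ((A i j : ℤ) : ZMod (a*b))).2 = ((A i j : ℤ) : ZMod b) := by
        rw [map_intCast]
        rfl
      rw [Prod.snd_mul, h2]
    set base := (Equiv.piCongrRight fun _ : Fin 3 => crt.toEquiv).trans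
        (Equiv.arrowProdEquivProdArrow (Fin 3) (fun _ => ZMod a) (fun _ => ZMod b)) with hbaseDef
    have E : {x : Fin 3 → ZMod (a*b) // ∀ j, ∑ i, ((A i j : ℤ) : ZMod (a*b)) * x i = 0}
        ≃ {y : Fin 3 → ZMod a // ∀ j, ∑ i, ((A i j : ℤ) : ZMod a) * y i = 0}
          × {z : Fin 3 → ZMod b // ∀ j, ∑ i, ((A i j : ℤ) : ZMod b) * z i = 0} := by
      refine Equiv.trans (Equiv.subtypeEquiv base ?_) (Equiv.subtypeProdEquivProd)
      intro x
      have hb1 : ∀ i, (base x).1 i = (crt (x i)).1 := fun _ => rfl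
      have hb2 : ∀ i, (base x).2 i = (crt (x i)).2 := fun _ => rfl
      constructor
      · intro h
        constructor
        · intro j
          simp only [hb1]
          rw [← hfst x j, h j, map_zero]
          rfl
        · intro j
          simp only [hb2]
          rw [← hsnd x j, h j, map_zero]
          rfl
      · rintro ⟨h1, h2⟩ j
        rw [key]
        refine ⟨?_, ?_⟩
        · rw [hfst x j]
          simpa only [hb1] using h1 j
        · rw [hsnd x j]
          simpa only [hb2] using h2 j
    rw [Nat.card_congr E, Nat.card_prod, ca, cb]
    ring


lemma mulVec_smul' {R : Type*} [CommRing R] (C : Matrix (Fin 3) (Fin 3) R) (a : R)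
    (v : Fin 3 → R) : C.mulVec (a • v) = a • C.mulVec v := by
  funext i
  simp only [Matrix.mulVec, dotProduct, Pi.smul_apply, smul_eq_mul, Finset.mul_sum]
  exact Finset.sum_congr rfl fun j _ => by ring

lemma int_vec_smul_cancel {c : ℤ} (hc : c ≠ 0) {x y : Fin 3 → ℤ} (h : c • x = c • y) :
    x = y := by
  funext i
  have h2 : c * x i = c * y i := by
    have := congrFun h i
    simpa [Pi.smul_apply, smul_eq_mul] using this
  exact mul_left_cancel₀ hc h2

lemma exists_eq_smul_of_dvd {c : ℤ} {x : Fin 3 → ℤ} (h : ∀ i, c ∣ x i) :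
    ∃ w : Fin 3 → ℤ, x = c • w := by
  refine ⟨fun i => x i / c, funext fun i => ?_⟩
  simpa [Pi.smul_apply, smul_eq_mul] using (Int.mul_ediv_cancel' (h i)).symm

lemma smul_mat_cancel {c : ℤ} (hc : c ≠ 0) {X Y : Matrix (Fin 3) (Fin 3) ℤ}
    (h : c • X = c • Y) : X = Y := by
  ext i j
  have h2 : c * X i j = c * Y i j := by
    have := congrFun (congrFun h i) j
    simpa [Matrix.smul_apply, smul_eq_mul] using this
  exact mul_left_cancel₀ hc h2

lemma dvd_iff_exists_mulVec (B : Matrix (Fin 3) (Fin 3) ℤ) (Dz : ℤ) (hD : Dz ≠ 0)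
    (hBBT : B * Bᵀ = (Dz^2) • (1 : Matrix (Fin 3) (Fin 3) ℤ))
    (hBTB : Bᵀ * B = (Dz^2) • (1 : Matrix (Fin 3) (Fin 3) ℤ)) (v : Fin 3 → ℤ) :
    (∃ w, B.mulVec w = Dz • v) ↔ (∀ i, Dz ∣ Bᵀ.mulVec v i) := by
  constructor
  · rintro ⟨w, hw⟩
    have h1 : Bᵀ.mulVec (B.mulVec w) = Bᵀ.mulVec (Dz • v) := by rw [hw]
    rw [Matrix.mulVec_mulVec, hBTB, Matrix.smul_mulVec, Matrix.one_mulVec,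
      mulVec_smul'] at h1
    have h2 : Dz • (Dz • w) = Dz • (Bᵀ.mulVec v) := by
      rw [smul_smul, ← pow_two]
      exact h1
    have h3 := int_vec_smul_cancel hD h2
    intro i
    rw [← h3]
    exact ⟨w i, by simp [Pi.smul_apply, smul_eq_mul]⟩
  · intro hdvd
    obtain ⟨w, hw⟩ := exists_eq_smul_of_dvd hdvd
    refine ⟨w, ?_⟩
    have h1 : B.mulVec (Bᵀ.mulVec v) = (Dz^2) • v := by
      rw [Matrix.mulVec_mulVec, hBBT, Matrix.smul_mulVec, Matrix.one_mulVec]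
    rw [hw, mulVec_smul'] at h1
    apply int_vec_smul_cancel hD
    rw [h1, smul_smul, ← pow_two]


set_option maxHeartbeats 2000000 in
lemma cayley_eq (k l m n : ℤ) :
    cayley k l m n
      = (((k^2+l^2+m^2+n^2 : ℤ)):ℝ)⁻¹ • ((Mq k l m n).map (Int.cast : ℤ → ℝ)) := by
  ext i j
  fin_cases i <;> fin_cases j
  · show ((k : ℝ)^2 + (l : ℝ)^2 + (m : ℝ)^2 + (n : ℝ)^2)⁻¹ * ((k : ℝ)^2 + (l : ℝ)^2 - (m : ℝ)^2 - (n : ℝ)^2)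
        = (((k^2+l^2+m^2+n^2 : ℤ)):ℝ)⁻¹ * (((k^2 + l^2 - m^2 - n^2 : ℤ)):ℝ)
    push_cast
    ring
  · show ((k : ℝ)^2 + (l : ℝ)^2 + (m : ℝ)^2 + (n : ℝ)^2)⁻¹ * (-2*(k : ℝ)*(n : ℝ) + 2*(l : ℝ)*(m : ℝ))
        = (((k^2+l^2+m^2+n^2 : ℤ)):ℝ)⁻¹ * (((-2*k*n + 2*l*m : ℤ)):ℝ)
    push_cast
    ring
  · show ((k : ℝ)^2 + (l : ℝ)^2 + (m : ℝ)^2 + (n : ℝ)^2)⁻¹ * (2*(k : ℝ)*(m : ℝ) + 2*(l : ℝ)*(n : ℝ))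
        = (((k^2+l^2+m^2+n^2 : ℤ)):ℝ)⁻¹ * (((2*k*m + 2*l*n : ℤ)):ℝ)
    push_cast
    ring
  · show ((k : ℝ)^2 + (l : ℝ)^2 + (m : ℝ)^2 + (n : ℝ)^2)⁻¹ * (2*(k : ℝ)*(n : ℝ) + 2*(l : ℝ)*(m : ℝ))
        = (((k^2+l^2+m^2+n^2 : ℤ)):ℝ)⁻¹ * (((2*k*n + 2*l*m : ℤ)):ℝ)
    push_cast
    ring
  · show ((k : ℝ)^2 + (l : ℝ)^2 + (m : ℝ)^2 + (n : ℝ)^2)⁻¹ * ((k : ℝ)^2 - (l : ℝ)^2 + (m : ℝ)^2 - (n : ℝ)^2)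
        = (((k^2+l^2+m^2+n^2 : ℤ)):ℝ)⁻¹ * (((k^2 - l^2 + m^2 - n^2 : ℤ)):ℝ)
    push_cast
    ring
  · show ((k : ℝ)^2 + (l : ℝ)^2 + (m : ℝ)^2 + (n : ℝ)^2)⁻¹ * (-2*(k : ℝ)*(l : ℝ) + 2*(m : ℝ)*(n : ℝ))
        = (((k^2+l^2+m^2+n^2 : ℤ)):ℝ)⁻¹ * (((-2*k*l + 2*m*n : ℤ)):ℝ)
    push_cast
    ring
  · show ((k : ℝ)^2 + (l : ℝ)^2 + (m : ℝ)^2 + (n : ℝ)^2)⁻¹ * (-2*(k : ℝ)*(m : ℝ) + 2*(l : ℝ)*(n : ℝ))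
        = (((k^2+l^2+m^2+n^2 : ℤ)):ℝ)⁻¹ * (((-2*k*m + 2*l*n : ℤ)):ℝ)
    push_cast
    ring
  · show ((k : ℝ)^2 + (l : ℝ)^2 + (m : ℝ)^2 + (n : ℝ)^2)⁻¹ * (2*(k : ℝ)*(l : ℝ) + 2*(m : ℝ)*(n : ℝ))
        = (((k^2+l^2+m^2+n^2 : ℤ)):ℝ)⁻¹ * (((2*k*l + 2*m*n : ℤ)):ℝ)
    push_cast
    ring
  · show ((k : ℝ)^2 + (l : ℝ)^2 + (m : ℝ)^2 + (n : ℝ)^2)⁻¹ * ((k : ℝ)^2 - (l : ℝ)^2 - (m : ℝ)^2 + (n : ℝ)^2)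
        = (((k^2+l^2+m^2+n^2 : ℤ)):ℝ)⁻¹ * (((k^2 - l^2 - m^2 + n^2 : ℤ)):ℝ)
    push_cast
    ring
end S13

set_option maxHeartbeats 2000000 in
/-- For a primitive integer quaternion `q = (κ,λ,μ,ν)`, the coincidence index of the Cayley
rotation `R(q)` on `ℤ³` equals the denominator `den(R(q))`, which is the odd part
`|q|²/2^ℓ` of the norm `|q|²`. -/
theorem stmt13 (k l m n : ℤ)
    (hprim : Int.gcd (Int.gcd k l) (Int.gcd m n) = 1) :
    (Zd 3 ⊓ latmap (cayley k l m n) (Zd 3)).relIndex (Zd 3) =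
      (k^2 + l^2 + m^2 + n^2).toNat / 2 ^ ((k^2 + l^2 + m^2 + n^2).toNat.factorization 2) ∧
    IsLeast {c : ℕ | 0 < c ∧ ∀ i j, ∃ z : ℤ, (c : ℝ) * cayley k l m n i j = (z : ℝ)}
      ((k^2 + l^2 + m^2 + n^2).toNat / 2 ^ ((k^2 + l^2 + m^2 + n^2).toNat.factorization 2)) := by
  classical
  have hNpos : (0:ℤ) < k^2+l^2+m^2+n^2 := by
    rcases lt_or_eq_of_le (by positivity : (0:ℤ) ≤ k^2+l^2+m^2+n^2) with h | h
    · exact h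
    · exfalso
      have hk : k = 0 := by nlinarith [sq_nonneg k, sq_nonneg l, sq_nonneg m, sq_nonneg n]
      have hl : l = 0 := by nlinarith [sq_nonneg k, sq_nonneg l, sq_nonneg m, sq_nonneg n]
      have hm : m = 0 := by nlinarith [sq_nonneg k, sq_nonneg l, sq_nonneg m, sq_nonneg n]
      have hn : n = 0 := by nlinarith [sq_nonneg k, sq_nonneg l, sq_nonneg m, sq_nonneg n]
      rw [hk, hl, hm, hn] at hprim
      simp [Int.gcd] at hprim
  set N : ℤ := k^2+l^2+m^2+n^2 with hNdef
  set Nn : ℕ := N.toNat with hNndef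
  have hNn : (Nn : ℤ) = N := Int.toNat_of_nonneg hNpos.le
  have hNn0 : Nn ≠ 0 := by omega
  set L : ℕ := Nn.factorization 2 with hLdef
  set D : ℕ := Nn / 2 ^ L with hDdef
  have hprod : 2 ^ L * D = Nn := Nat.ordProj_mul_ordCompl_eq_self Nn 2
  have h2D : ¬ 2 ∣ D := Nat.not_dvd_ordCompl Nat.prime_two hNn0
  have hDodd : Odd D := Nat.odd_iff.mpr (by omega)
  have hD0 : 0 < D := by
    rcases Nat.eq_zero_or_pos D with h | h
    · exfalso; rw [h, mul_zero] at hprod; omega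
    · exact h
  have hD0' : (D:ℤ) ≠ 0 := by exact_mod_cast hD0.ne'
  have hDR : (D:ℝ) ≠ 0 := by exact_mod_cast hD0.ne'
  -- the parity trichotomy
  have tri : N % 2 = 1 ∨ N % 4 = 2 ∨
      (N % 8 = 4 ∧ k % 2 = 1 ∧ l % 2 = 1 ∧ m % 2 = 1 ∧ n % 2 = 1) := by
    have h1 := S13.sq_facts k
    have h2 := S13.sq_facts l
    have h3 := S13.sq_facts m
    have h4 := S13.sq_facts n
    have hne : ¬ (k % 2 = 0 ∧ l % 2 = 0 ∧ m % 2 = 0 ∧ n % 2 = 0) := by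
      rintro ⟨hk, hl, hm, hn⟩
      have habs : ∀ x : ℤ, x % 2 = 0 → 2 ∣ x.natAbs := by
        intro x hx
        have hd : (2:ℤ) ∣ x := Int.dvd_of_emod_eq_zero hx
        have := Int.natAbs_dvd_natAbs.mpr hd
        simpa using this
      have hg1 : 2 ∣ Int.gcd k l := Nat.dvd_gcd (habs k hk) (habs l hl)
      have hg2 : 2 ∣ Int.gcd m n := Nat.dvd_gcd (habs m hm) (habs n hn)
      have hprim' : Nat.gcd (Int.gcd k l) (Int.gcd m n) = 1 := by
        simpa [Int.gcd, Int.natAbs_natCast] using hprim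
      have : (2:ℕ) ∣ 1 := hprim' ▸ Nat.dvd_gcd hg1 hg2
      norm_num at this
    have hNeq : N = k^2+l^2+m^2+n^2 := hNdef
    omega
  -- determination of L and divisibility of the entries of Mq
  have hLcase : (L = 0) ∨ (L = 1 ∧ N % 2 = 0) ∨
      (L = 2 ∧ N % 8 = 4 ∧ k % 2 = 1 ∧ l % 2 = 1 ∧ m % 2 = 1 ∧ n % 2 = 1) := by
    rcases tri with h | h | h
    · left
      rw [hLdef]
      apply Nat.factorization_eq_zero_of_not_dvd
      omega
    · right; left
      refine ⟨?_, by omega⟩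
      have hle : 1 ≤ L := by
        have hdvd : 2^1 ∣ Nn := by omega
        exact (Nat.Prime.pow_dvd_iff_le_factorization Nat.prime_two hNn0).mp hdvd
      have hlt : ¬ 2 ≤ L := by
        intro hc
        have : 2^2 ∣ Nn := (Nat.Prime.pow_dvd_iff_le_factorization Nat.prime_two hNn0).mpr hc
        omega
      omega
    · right; right
      refine ⟨?_, h.1, h.2.1, h.2.2.1, h.2.2.2.1, h.2.2.2.2⟩
      have hle : 2 ≤ L := by
        have hdvd : 2^2 ∣ Nn := by omega
        exact (Nat.Prime.pow_dvd_iff_le_factorization Nat.prime_two hNn0).mp hdvd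
      have hlt : ¬ 3 ≤ L := by
        intro hc
        have : 2^3 ∣ Nn := (Nat.Prime.pow_dvd_iff_le_factorization Nat.prime_two hNn0).mpr hc
        omega
      omega
  have hMdvd : ∀ i j, (2:ℤ)^L ∣ S13.Mq k l m n i j := by
    rcases hLcase with hL0 | ⟨hL1, hN2⟩ | ⟨hL2, h8, hko, hlo, hmo, hno⟩
    · intro i j; rw [hL0, pow_zero]; exact one_dvd _
    · intro i j
      rw [hL1, pow_one]
      have h2N : (2:ℤ) ∣ N := Int.dvd_of_emod_eq_zero hN2
      obtain ⟨t, ht⟩ := h2N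
      have htt : k^2+l^2+m^2+n^2 = 2*t := by rw [← hNdef]; exact ht
      fin_cases i <;> fin_cases j
      · exact ⟨t - m^2 - n^2, by
          show (k^2+l^2-m^2-n^2 : ℤ) = 2*(t - m^2 - n^2); linear_combination htt⟩
      · exact ⟨-(k*n) + l*m, by show (-2*k*n+2*l*m : ℤ) = 2*(-(k*n) + l*m); ring⟩
      · exact ⟨k*m + l*n, by show (2*k*m+2*l*n : ℤ) = 2*(k*m + l*n); ring⟩
      · exact ⟨k*n + l*m, by show (2*k*n+2*l*m : ℤ) = 2*(k*n + l*m); ring⟩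
      · exact ⟨t - l^2 - n^2, by
          show (k^2-l^2+m^2-n^2 : ℤ) = 2*(t - l^2 - n^2); linear_combination htt⟩
      · exact ⟨-(k*l) + m*n, by show (-2*k*l+2*m*n : ℤ) = 2*(-(k*l) + m*n); ring⟩
      · exact ⟨-(k*m) + l*n, by show (-2*k*m+2*l*n : ℤ) = 2*(-(k*m) + l*n); ring⟩
      · exact ⟨k*l + m*n, by show (2*k*l+2*m*n : ℤ) = 2*(k*l + m*n); ring⟩
      · exact ⟨t - l^2 - m^2, by
          show (k^2-l^2-m^2+n^2 : ℤ) = 2*(t - l^2 - m^2); linear_combination htt⟩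
    · intro i j
      rw [hL2]
      have hsq : ∀ x : ℤ, x % 2 = 1 → x^2 % 8 = 1 := by
        intro x hx
        rcases S13.sq_facts x with ⟨h1,_⟩ | ⟨_,h2⟩
        · omega
        · exact h2
      have e1 := hsq k hko
      have e2 := hsq l hlo
      have e3 := hsq m hmo
      have e4 := hsq n hno
      have omul : ∀ x y : ℤ, x % 2 = 1 → y % 2 = 1 → (x*y) % 2 = 1 := by
        intro x y hx hy
        exact Int.odd_iff.mp ((Int.odd_iff.mpr hx).mul (Int.odd_iff.mpr hy))
      have okn := omul k n hko hno
      have olm := omul l m hlo hmo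
      have okm := omul k m hko hmo
      have oln := omul l n hlo hno
      have okl := omul k l hko hlo
      have omn := omul m n hmo hno
      have hp4 : ((2:ℤ)^2 : ℤ) = 4 := by norm_num
      rw [hp4]
      fin_cases i <;> fin_cases j
      · show (4:ℤ) ∣ k^2+l^2-m^2-n^2
        omega
      · show (4:ℤ) ∣ -2*k*n+2*l*m
        have hr : (-2*k*n+2*l*m : ℤ) = -2*(k*n) + 2*(l*m) := by ring
        rw [hr]; omega
      · show (4:ℤ) ∣ 2*k*m+2*l*n
        have hr : (2*k*m+2*l*n : ℤ) = 2*(k*m) + 2*(l*n) := by ring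
        rw [hr]; omega
      · show (4:ℤ) ∣ 2*k*n+2*l*m
        have hr : (2*k*n+2*l*m : ℤ) = 2*(k*n) + 2*(l*m) := by ring
        rw [hr]; omega
      · show (4:ℤ) ∣ k^2-l^2+m^2-n^2
        omega
      · show (4:ℤ) ∣ -2*k*l+2*m*n
        have hr : (-2*k*l+2*m*n : ℤ) = -2*(k*l) + 2*(m*n) := by ring
        rw [hr]; omega
      · show (4:ℤ) ∣ -2*k*m+2*l*n
        have hr : (-2*k*m+2*l*n : ℤ) = -2*(k*m) + 2*(l*n) := by ring
        rw [hr]; omega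
      · show (4:ℤ) ∣ 2*k*l+2*m*n
        have hr : (2*k*l+2*m*n : ℤ) = 2*(k*l) + 2*(m*n) := by ring
        rw [hr]; omega
      · show (4:ℤ) ∣ k^2-l^2-m^2+n^2
        omega
  -- the integer matrix B with Mq = 2^L • B
  set B : Matrix (Fin 3) (Fin 3) ℤ := Matrix.of (fun i j => S13.Mq k l m n i j / 2^L)
    with hBdef
  have hMB : ∀ i j, S13.Mq k l m n i j = 2^L * B i j := by
    intro i j
    show _ = 2^L * (S13.Mq k l m n i j / 2^L)
    exact (Int.mul_ediv_cancel' (hMdvd i j)).symm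
  have hMBmat : S13.Mq k l m n = ((2:ℤ)^L) • B := by
    ext i j
    simp only [Matrix.smul_apply, smul_eq_mul]
    exact hMB i j
  have h2L0 : ((2:ℤ)^L) ≠ 0 := pow_ne_zero L two_ne_zero
  have hNsplit : N = (2:ℤ)^L * D := by
    rw [← hNn, ← hprod]
    push_cast
    ring
  have hBBT : B * Bᵀ = (((D:ℤ))^2) • (1 : Matrix (Fin 3) (Fin 3) ℤ) := by
    apply S13.smul_mat_cancel h2L0
    apply S13.smul_mat_cancel h2L0
    have h1 := S13.Mq_mul_transpose k l m n
    rw [← hNdef, hMBmat, Matrix.transpose_smul, Matrix.smul_mul, Matrix.mul_smul] at h1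
    rw [h1, hNsplit]
    simp only [smul_smul]
    congr 1
    ring
  have hBTB : Bᵀ * B = (((D:ℤ))^2) • (1 : Matrix (Fin 3) (Fin 3) ℤ) := by
    apply S13.smul_mat_cancel h2L0
    apply S13.smul_mat_cancel h2L0
    have h1 := S13.transpose_mul_Mq k l m n
    rw [← hNdef, hMBmat, Matrix.transpose_smul, Matrix.smul_mul, Matrix.mul_smul] at h1
    rw [h1, hNsplit]
    simp only [smul_smul]
    congr 1
    ring
  -- coprimality of D and 2
  have hcopD2 : IsCoprime ((D:ℤ)) ((2:ℤ)^L) := by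
    apply IsCoprime.pow_right
    rw [Int.isCoprime_iff_gcd_eq_one]
    have : Nat.Coprime D 2 := ((Nat.Prime.coprime_iff_not_dvd Nat.prime_two).mpr h2D).symm
    simpa [Int.gcd, Int.natAbs_natCast] using this
  have hminorB : ∀ i j i' j', ((D:ℤ)) ∣ (B i j * B i' j' - B i j' * B i' j) := by
    intro i j i' j'
    have h1 := S13.minor_dvd k l m n i j i' j'
    rw [← hNdef] at h1
    rw [hMB i j, hMB i' j', hMB i j', hMB i' j] at h1
    rw [hNsplit] at h1
    rw [show ((2:ℤ)^L * B i j) * (2^L * B i' j') - (2^L * B i j') * (2^L * B i' j)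
        = (2:ℤ)^L * (2^L * (B i j * B i' j' - B i j' * B i' j)) from by ring] at h1
    have h2 : (D:ℤ) ∣ (2:ℤ)^L * (B i j * B i' j' - B i j' * B i' j) :=
      (mul_dvd_mul_iff_left h2L0).mp h1
    exact hcopD2.dvd_of_dvd_mul_left h2
  have hpivB : ∀ p : ℕ, p.Prime → p ∣ D → ∃ i j, ¬ (p:ℤ) ∣ B i j := by
    intro p hp hpD
    have hp2 : p ≠ 2 := by rintro rfl; exact h2D hpD
    have hDN : D ∣ Nn := ⟨2^L, by rw [← hprod]; exact Nat.mul_comm _ _⟩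
    have hpN : (p:ℤ) ∣ N := by
      rw [← hNn]
      exact_mod_cast (hpD.trans hDN)
    by_contra hcon
    push_neg at hcon
    apply S13.keylemma k l m n hprim p hp hp2 (by rw [hNdef] at hpN; exact hpN)
    intro i j
    rw [hMB i j]
    exact Dvd.dvd.mul_left (hcon i j) _
  -- the entry formula for cayley
  have hcayM : cayley k l m n
      = (((N : ℤ)):ℝ)⁻¹ • ((S13.Mq k l m n).map (Int.cast : ℤ → ℝ)) := by
    rw [hNdef]
    exact S13.cayley_eq k l m n
  have hcayB : cayley k l m n = ((D:ℝ))⁻¹ • (B.map (Int.cast : ℤ → ℝ)) := by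
    rw [hcayM]
    ext i j
    simp only [Matrix.smul_apply, Matrix.map_apply, smul_eq_mul]
    rw [hMB i j, hNsplit]
    have h2R : ((2:ℝ)^L) ≠ 0 := pow_ne_zero L two_ne_zero
    push_cast
    field_simp
  -- the embedding of ℤ³ into ℝ³
  set e : (Fin 3 → ℤ) →+ (Fin 3 → ℝ) :=
    { toFun := fun v i => (v i : ℝ),
      map_zero' := by funext i; simp,
      map_add' := by intro x y; funext i; simp } with hedef
  have hZd_mem_iff : ∀ x : Fin 3 → ℝ, x ∈ Zd 3 ↔ ∀ i, ∃ z : ℤ, (z:ℝ) = x i := by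
    intro x
    constructor
    · intro hx i
      have h := ((AddSubgroup.mem_pi _).mp hx) i (Set.mem_univ i)
      obtain ⟨z, hz⟩ := AddSubgroup.mem_zmultiples_iff.mp h
      exact ⟨z, by simpa using hz⟩
    · intro hx
      refine (AddSubgroup.mem_pi _).mpr fun i _ => ?_
      obtain ⟨z, hz⟩ := hx i
      exact AddSubgroup.mem_zmultiples_iff.mpr ⟨z, by simpa using hz⟩
  have hmem : ∀ v : Fin 3 → ℤ, e v ∈ Zd 3 := by
    intro v
    rw [hZd_mem_iff]
    exact fun i => ⟨v i, rfl⟩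
  have he_inj : Function.Injective e := by
    intro x y h
    funext i
    have h2 : ((x i : ℤ):ℝ) = ((y i : ℤ):ℝ) := congrFun h i
    exact_mod_cast h2
  set e' : (Fin 3 → ℤ) →+ Zd 3 := e.codRestrict (Zd 3) hmem with he'def
  have he'_surj : Function.Surjective e' := by
    rintro ⟨x, hx⟩
    obtain hx' := (hZd_mem_iff x).mp hx
    choose v hv using hx'
    exact ⟨v, Subtype.ext (funext fun i => hv i)⟩
  -- the kernel description
  haveI : NeZero D := ⟨hD0.ne'⟩
  set φ : (Fin 3 → ℤ) →+ (Fin 3 → ZMod D) :=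
    { toFun := fun v => ((Bᵀ).map (Int.cast : ℤ → ZMod D)).mulVec (fun i => ((v i : ℤ) : ZMod D)),
      map_zero' := by
        funext j
        simp [Matrix.mulVec, dotProduct],
      map_add' := by
        intro x y
        funext j
        simp only [Matrix.mulVec, dotProduct, Pi.add_apply]
        push_cast
        rw [← Finset.sum_add_distrib]
        exact Finset.sum_congr rfl fun i _ => by ring } with hφdef
  -- the membership equivalence
  have hstep : ∀ v : Fin 3 → ℤ,
      (e v ∈ latmap (cayley k l m n) (Zd 3)) ↔ (∀ i, (D:ℤ) ∣ (Bᵀ).mulVec v i) := by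
    intro v
    rw [← S13.dvd_iff_exists_mulVec B (D:ℤ) hD0' hBBT hBTB v]
    constructor
    · intro hmem2
      obtain ⟨y, hy, hxy⟩ := AddSubgroup.mem_map.mp hmem2
      obtain hx' := (hZd_mem_iff y).mp hy
      choose w hw using hx'
      have hyw : y = e w := by funext i; exact (hw i).symm
      rw [hyw] at hxy
      have hxy' : (cayley k l m n).mulVec (e w) = e v := by
        simpa [Matrix.mulVecLin_apply] using hxy
      rw [hcayB, Matrix.smul_mulVec] at hxy'
      have hcast : (B.map (Int.cast : ℤ → ℝ)).mulVec (e w)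
          = fun i => ((B.mulVec w i : ℤ) : ℝ) := S13.cast_mulVec B w
      rw [hcast] at hxy'
      refine ⟨w, ?_⟩
      funext i
      have h1 : (D:ℝ)⁻¹ * ((B.mulVec w i : ℤ) : ℝ) = ((v i : ℤ) : ℝ) := congrFun hxy' i
      have h2 : ((B.mulVec w i : ℤ) : ℝ) = (((D:ℤ) * v i : ℤ) : ℝ) := by
        push_cast
        push_cast at h1
        field_simp at h1
        linarith
      have h4 : B.mulVec w i = (D:ℤ) * v i := by exact_mod_cast h2
      simpa using h4
    · rintro ⟨w, hw⟩
      apply AddSubgroup.mem_map.mpr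
      refine ⟨e w, hmem w, ?_⟩
      show (cayley k l m n).mulVecLin (e w) = e v
      rw [Matrix.mulVecLin_apply, hcayB, Matrix.smul_mulVec]
      have hcast : (B.map (Int.cast : ℤ → ℝ)).mulVec (e w)
          = fun i => ((B.mulVec w i : ℤ) : ℝ) := S13.cast_mulVec B w
      rw [hcast]
      funext i
      have h1 : B.mulVec w i = (D:ℤ) * v i := by
        have := congrFun hw i
        simpa using this
      show (D:ℝ)⁻¹ * ((B.mulVec w i : ℤ) : ℝ) = ((v i : ℤ) : ℝ)
      rw [h1]
      push_cast
      field_simp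
  have hφker : ∀ v : Fin 3 → ℤ, (φ v = 0 ↔ ∀ i, (D:ℤ) ∣ (Bᵀ).mulVec v i) := by
    intro v
    have hcast : ((Bᵀ).map (Int.cast : ℤ → ZMod D)).mulVec (fun i => ((v i : ℤ) : ZMod D))
        = fun i => (((Bᵀ).mulVec v i : ℤ) : ZMod D) := S13.cast_mulVec Bᵀ v
    constructor
    · intro h i
      have h1 : (fun i => (((Bᵀ).mulVec v i : ℤ) : ZMod D)) = (0 : Fin 3 → ZMod D) := by
        rw [← hcast]; exact h
      have h2 := congrFun h1 i
      exact (ZMod.intCast_zmod_eq_zero_iff_dvd _ D).mp h2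
    · intro h
      show ((Bᵀ).map (Int.cast : ℤ → ZMod D)).mulVec (fun i => ((v i : ℤ) : ZMod D)) = 0
      rw [hcast]
      funext i
      exact (ZMod.intCast_zmod_eq_zero_iff_dvd _ D).mpr (h i)
  have hker : ((Zd 3 ⊓ latmap (cayley k l m n) (Zd 3)).addSubgroupOf (Zd 3)).comap e' = φ.ker := by
    ext v
    simp only [AddSubgroup.mem_comap, AddSubgroup.mem_addSubgroupOf, AddSubgroup.mem_inf,
      AddMonoidHom.mem_ker]
    have hcoe : ((e' v : Zd 3) : Fin 3 → ℝ) = e v := rfl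
    rw [hcoe]
    rw [hφker v, ← hstep v]
    constructor
    · rintro ⟨-, h⟩; exact h
    · intro h; exact ⟨hmem v, h⟩
  -- index computation
  have hrel : (Zd 3 ⊓ latmap (cayley k l m n) (Zd 3)).relIndex (Zd 3) = φ.ker.index := by
    have h1 : (Zd 3 ⊓ latmap (cayley k l m n) (Zd 3)).relIndex (Zd 3)
        = ((Zd 3 ⊓ latmap (cayley k l m n) (Zd 3)).addSubgroupOf (Zd 3)).index := rfl
    rw [h1, ← AddSubgroup.index_comap_of_surjective _ he'_surj, hker]
  set ψ : (Fin 3 → ZMod D) →+ (Fin 3 → ZMod D) :=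
    { toFun := fun x => ((Bᵀ).map (Int.cast : ℤ → ZMod D)).mulVec x,
      map_zero' := Matrix.mulVec_zero _,
      map_add' := fun x y => Matrix.mulVec_add _ x y } with hψdef
  have hq : φ.ker.index = Nat.card φ.range := by
    rw [AddSubgroup.index]
    exact Nat.card_congr (QuotientAddGroup.quotientKerEquivRange φ).toEquiv
  have hrangeeq : φ.range = ψ.range := by
    ext y
    simp only [AddMonoidHom.mem_range]
    constructor
    · rintro ⟨v, rfl⟩
      exact ⟨fun i => ((v i : ℤ) : ZMod D), rfl⟩
    · rintro ⟨x, rfl⟩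
      have hx : ∀ i, ∃ z : ℤ, ((z : ℤ) : ZMod D) = x i := fun i => ZMod.intCast_surjective (x i)
      choose v hv using hx
      refine ⟨v, ?_⟩
      have hvv : (fun i => ((v i : ℤ) : ZMod D)) = x := funext fun i => hv i
      show ((Bᵀ).map (Int.cast : ℤ → ZMod D)).mulVec (fun i => ((v i : ℤ) : ZMod D))
          = ((Bᵀ).map (Int.cast : ℤ → ZMod D)).mulVec x
      rw [hvv]
  have hcount := S13.count_lemma B D hDodd hminorB hpivB D (dvd_refl D)
  have hkerψ : Nat.card ψ.ker = D^2 := by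
    have e1 : {x : Fin 3 → ZMod D // x ∈ ψ.ker}
        ≃ {x : Fin 3 → ZMod D // ∀ j, ∑ i, ((B i j : ℤ) : ZMod D) * x i = 0} := by
      apply Equiv.subtypeEquivRight
      intro x
      rw [AddMonoidHom.mem_ker]
      constructor
      · intro h j
        have := congrFun h j
        simpa [hψdef, Matrix.mulVec, dotProduct, Matrix.map_apply,
          Matrix.transpose_apply] using this
      · intro h
        show ((Bᵀ).map (Int.cast : ℤ → ZMod D)).mulVec x = 0
        funext j
        simpa [Matrix.mulVec, dotProduct, Matrix.map_apply,
          Matrix.transpose_apply] using h j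
    rw [Nat.card_congr e1, hcount]
  have htotD : Nat.card (Fin 3 → ZMod D) = D^3 := by
    rw [Nat.card_eq_fintype_card, Fintype.card_fun, ZMod.card]
    norm_num
  have hKR := S13.nat_card_ker_mul_range ψ
  rw [htotD, hkerψ] at hKR
  have hrangecard : Nat.card ψ.range = D := by
    have h3 : D^3 = D^2 * D := by ring
    rw [h3] at hKR
    have hD2 : 0 < D^2 := pow_pos hD0 2
    exact (Nat.eq_of_mul_eq_mul_left hD2 hKR.symm)
  have hfirst : (Zd 3 ⊓ latmap (cayley k l m n) (Zd 3)).relIndex (Zd 3) = D := by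
    rw [hrel, hq, hrangeeq, hrangecard]
  refine ⟨hfirst, ?_, ?_⟩
  · -- D is in the set
    refine ⟨hD0, ?_⟩
    intro i j
    refine ⟨B i j, ?_⟩
    rw [hcayB]
    simp only [Matrix.smul_apply, Matrix.map_apply, smul_eq_mul]
    field_simp
  · -- D is a lower bound
    rintro c ⟨hc0, hc⟩
    have hint : ∀ i j, (N:ℤ) ∣ (c:ℤ) * S13.Mq k l m n i j := by
      intro i j
      obtain ⟨z, hz⟩ := hc i j
      rw [hcayM] at hz
      simp only [Matrix.smul_apply, Matrix.map_apply, smul_eq_mul] at hz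
      have hNR : ((N:ℤ):ℝ) ≠ 0 := by
        push_cast
        exact_mod_cast hNpos.ne'
      have h2 : ((c:ℤ) * S13.Mq k l m n i j : ℝ) = ((z * N : ℤ) : ℝ) := by
        push_cast
        push_cast at hz
        field_simp at hz
        linarith [hz]
      have h3 : (c:ℤ) * S13.Mq k l m n i j = z * N := by exact_mod_cast h2
      exact ⟨z, by linarith [h3]⟩
    -- conclude D ∣ c
    have hdvd : D ∣ c := by
      rw [← Nat.factorization_le_iff_dvd hD0.ne' hc0.ne']
      intro p
      rcases Nat.eq_zero_or_pos (D.factorization p) with hzero | hpos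
      · rw [hzero]; exact Nat.zero_le _
      by_cases hp : p.Prime
      swap
      · rw [Nat.factorization_eq_zero_of_not_prime D hp]
        exact Nat.zero_le _
      have hp2 : p ≠ 2 := by
        rintro rfl
        have : 2 ∣ D := Nat.dvd_of_factorization_pos hpos.ne'
        exact h2D this
      have hpD : p ∣ D := Nat.dvd_of_factorization_pos hpos.ne'
      obtain ⟨i, j, hBij⟩ := hpivB p hp hpD
      set a := D.factorization p with hadef
      have hpaD : p^a ∣ D := Nat.ordProj_dvd D p
      have hDN : D ∣ Nn := ⟨2^L, by rw [← hprod]; exact Nat.mul_comm _ _⟩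
      have hpaN : ((p:ℤ))^a ∣ N := by
        rw [← hNn]
        exact_mod_cast (hpaD.trans hDN)
      have h1 : ((p:ℤ))^a ∣ (c:ℤ) * S13.Mq k l m n i j := hpaN.trans (hint i j)
      rw [hMB i j] at h1
      -- p^a ∣ c * (2^L * B i j); p odd and p ∤ B i j
      have hnm : ¬ p ∣ ((2:ℤ)^L * B i j).natAbs := by
        intro hcon
        have : (p:ℤ) ∣ (2:ℤ)^L * B i j := Int.dvd_natAbs.mp (Int.natCast_dvd_natCast.mpr hcon)
        have hpI : Prime (p:ℤ) := Nat.prime_iff_prime_int.mp hp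
        rcases hpI.dvd_mul.mp this with h | h
        · have := hpI.dvd_of_dvd_pow h
          have hp2' : (p:ℤ) ∣ 2 := this
          have hd2 : p ∣ 2 := by exact_mod_cast hp2'
          rcases (Nat.dvd_prime Nat.prime_two).mp hd2 with h' | h'
          · exact hp.ne_one h'
          · exact hp2 h' 
        · exact hBij h
      have h2 : p^a ∣ c * ((2:ℤ)^L * B i j).natAbs := by
        have hna : ((c:ℤ) * ((2:ℤ)^L * B i j)).natAbs = c * ((2:ℤ)^L * B i j).natAbs := by
          rw [Int.natAbs_mul]
          simp
        have := Int.natAbs_dvd_natAbs.mpr h1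
        rw [hna] at this
        simpa [Int.natAbs_pow] using this
      have hcop : Nat.Coprime (p^a) (((2:ℤ)^L * B i j).natAbs) :=
        Nat.Coprime.pow_left a ((hp.coprime_iff_not_dvd).mpr hnm)
      have h3 : p^a ∣ c := (Nat.Coprime.dvd_of_dvd_mul_right hcop h2)
      exact (Nat.Prime.pow_dvd_iff_le_factorization hp hc0.ne').mp h3
    exact Nat.le_of_dvd hc0 hdvd
end

section
/- For the denominator of a rational rotation R ∈ SO(3,ℚ): den(R) divides Σ(R) = [ℤ³ : ℤ³ ∩ Rℤ³], since Rℤ³ contains a vector a/den(R) with a ∈ ℤ³ primitive. -/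
open Matrix

/-- For a rational rotation `R ∈ SO(3,ℚ)` the denominator `den(R)` divides the coincidence
index `Σ(R) = [ℤ³ : ℤ³ ∩ Rℤ³]`; indeed `Rℤ³` contains a vector `a/den(R)` with `a ∈ ℤ³`
primitive. -/
theorem stmt15 (m : ℕ) (R : Matrix (Fin 3) (Fin 3) ℝ)
    (hR : R ∈ Matrix.orthogonalGroup (Fin 3) ℝ) (hdet : R.det = 1)
    (hrat : ∀ i j, ∃ q : ℚ, R i j = (q : ℝ))
    (hden : IsLeast {c : ℕ | 0 < c ∧ ∀ i j, ∃ z : ℤ, (c : ℝ) * R i j = (z : ℝ)} m) :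
    m ∣ (Zd 3 ⊓ latmap R (Zd 3)).relIndex (Zd 3) ∧
    ∃ a : Fin 3 → ℤ, Int.gcd (a 0) (Int.gcd (a 1) (a 2)) = 1 ∧
      (fun i => (a i : ℝ) / (m : ℝ)) ∈ latmap R (Zd 3) := by
  obtain ⟨⟨hm0, hint⟩, hleast⟩ := hden
  have hm0' : (m : ℝ) ≠ 0 := Nat.cast_ne_zero.mpr hm0.ne'
  choose A0 hA using hint
  set A : Matrix (Fin 3) (Fin 3) ℤ := Matrix.of A0 with hAdef
  have hA : ∀ i j, (m : ℝ) * R i j = (A i j : ℝ) := hA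
  -- orthogonality
  have hstar : star R = Rᵀ := by
    ext i j; simp [Matrix.star_apply]
  have hRtR : Rᵀ * R = 1 := by
    have h := (Matrix.mem_orthogonalGroup_iff' (Fin 3) ℝ).mp hR
    exact h
  -- minimality: anything making R integral is divisible by m
  have hdvd : ∀ c : ℕ, (∀ i j, ∃ z : ℤ, (c : ℝ) * R i j = (z : ℝ)) → m ∣ c := by
    intro c hc
    rcases Nat.eq_zero_or_pos (c % m) with h | h
    · exact Nat.dvd_of_mod_eq_zero h
    · exfalso
      have hmod : ((c % m : ℕ) : ℝ) = (c : ℝ) - ((c / m : ℕ) : ℝ) * m := by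
        have h2 := Nat.mod_add_div c m
        have h3 : ((c % m + m * (c / m) : ℕ) : ℝ) = (c : ℝ) := by rw [h2]
        push_cast at h3
        linarith
      have hmem : (c % m) ∈ {c : ℕ | 0 < c ∧ ∀ i j, ∃ z : ℤ, (c : ℝ) * R i j = (z : ℝ)} := by
        refine ⟨h, fun i j => ?_⟩
        obtain ⟨z, hz⟩ := hc i j
        refine ⟨z - (c / m : ℕ) * A i j, ?_⟩
        rw [hmod, Int.cast_sub, Int.cast_mul, Int.cast_natCast]
        linear_combination hz - ((c / m : ℕ) : ℝ) * hA i j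
      have := hleast hmem
      have := Nat.mod_lt c hm0
      omega
  constructor
  · -- divisibility part
    refine hdvd _ ?_
    intro i j
    set n := (Zd 3 ⊓ latmap R (Zd 3)).relIndex (Zd 3) with hn
    have hv : (fun k => if k = i then (1:ℝ) else 0) ∈ Zd 3 := by
      intro k _
      refine ⟨if k = i then 1 else 0, ?_⟩
      by_cases h : k = i <;> simp [h]
    have hmem := AddSubgroup.nsmul_index_mem
      ((Zd 3 ⊓ latmap R (Zd 3)).addSubgroupOf (Zd 3)) ⟨_, hv⟩
    rw [AddSubgroup.mem_addSubgroupOf] at hmem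
    have hmem2 : (n • fun k => if k = i then (1:ℝ) else 0) ∈ latmap R (Zd 3) := by
      exact hmem.2
    obtain ⟨w, hw, hww⟩ := hmem2
    choose z hz using fun k => hw k (Set.mem_univ k)
    have hww' : R.mulVec w = (n • fun k => if k = i then (1:ℝ) else 0) := hww
    have hw2 : w = Rᵀ.mulVec (n • fun k => if k = i then (1:ℝ) else 0) := by
      rw [← hww', Matrix.mulVec_mulVec, hRtR, Matrix.one_mulVec]
    refine ⟨z j, ?_⟩
    simp only [zsmul_eq_mul, mul_one] at hz
    have hj : (z j : ℝ) = (Rᵀ *ᵥ (n • fun k => if k = i then (1:ℝ) else 0)) j :=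
      (hz j).trans (congrFun hw2 j)
    rw [hj]
    have : (n • fun k => if k = i then (1:ℝ) else 0) = fun k => if k = i then (n:ℝ) else 0 := by
      funext k
      by_cases h : k = i <;> simp [h]
    rw [this]
    simp [Matrix.mulVec, dotProduct, mul_ite, Matrix.transpose_apply]
    ring
  · -- primitive vector part
    -- for each prime factor p of m, some entry of A is not divisible by p
    have hAp : ∀ p : ℕ, ∃ i j, p ∈ m.primeFactors → ¬ ((p:ℤ) ∣ A i j) := by
      intro p
      by_cases hp : p ∈ m.primeFactors
      · by_contra hcon
        push_neg at hcon
        have pp := Nat.prime_of_mem_primeFactors hp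
        have hpm := Nat.dvd_of_mem_primeFactors hp
        have hp0 : (p : ℝ) ≠ 0 := Nat.cast_ne_zero.mpr pp.pos.ne'
        have hmp : 0 < m / p := Nat.div_pos (Nat.le_of_dvd hm0 hpm) pp.pos
        have hle : m ≤ m / p := by
          refine hleast ⟨hmp, fun i j => ?_⟩
          obtain ⟨z, hz⟩ := (hcon i j).2
          refine ⟨z, ?_⟩
          have hcast : ((m / p : ℕ) : ℝ) * p = m := by
            rw [← Nat.cast_mul, Nat.div_mul_cancel hpm]
          apply mul_left_cancel₀ hp0
          have hAz : (A i j : ℝ) = (p : ℝ) * z := by exact_mod_cast congrArg (Int.cast : ℤ → ℝ) hz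
          calc (p:ℝ) * (((m / p : ℕ) : ℝ) * R i j) = (((m / p : ℕ) : ℝ) * p) * R i j := by ring
          _ = (m:ℝ) * R i j := by rw [hcast]
          _ = (A i j : ℝ) := hA i j
          _ = (p:ℝ) * z := hAz
        have := Nat.div_lt_self hm0 pp.one_lt
        omega
      · exact ⟨0, 0, fun h => absurd h hp⟩
    choose I J hIJ using hAp
    set y : Fin 3 → ℤ := fun j => ∏ p ∈ m.primeFactors.filter (fun p => J p ≠ j), (p : ℤ)
      with hydef
    have hy1 : ∀ q : ℕ, q.Prime → ∀ j, (q:ℤ) ∣ y j → q ∈ m.primeFactors ∧ J q ≠ j := by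
      intro q hq j hdvd
      have hq' : Prime (q:ℤ) := Nat.prime_iff_prime_int.mp hq
      obtain ⟨p, hp, hpd⟩ := (hq'.dvd_finset_prod_iff _).mp hdvd
      rw [Finset.mem_filter] at hp
      have hqp : q = p :=
        (Nat.prime_dvd_prime_iff_eq hq (Nat.prime_of_mem_primeFactors hp.1)).mp
          (Int.natCast_dvd_natCast.mp hpd)
      subst hqp
      exact ⟨hp.1, hp.2⟩
    have hy2 : ∀ p ∈ m.primeFactors, ∀ j, J p ≠ j → (p:ℤ) ∣ y j := by
      intro p hp j hj
      exact Finset.dvd_prod_of_mem _ (Finset.mem_filter.mpr ⟨hp, hj⟩)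
    have hy3 : ∀ p ∈ m.primeFactors, ¬ (p:ℤ) ∣ y (J p) := by
      intro p hp hdvd
      exact (hy1 p (Nat.prime_of_mem_primeFactors hp) (J p) hdvd).2 rfl
    set a : Fin 3 → ℤ := A.mulVec y with hadef
    have ha : ∀ i, a i = ∑ j, A i j * y j := by
      intro i; simp [hadef, Matrix.mulVec, dotProduct]
    -- key matrix identity
    have hAtA : Aᵀ * A = ((m:ℤ)^2) • (1 : Matrix (Fin 3) (Fin 3) ℤ) := by
      ext i j
      have key : (((Aᵀ * A) i j : ℤ) : ℝ) = (m:ℝ)^2 * ((Rᵀ * R) i j) := by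
        simp only [Matrix.mul_apply, Matrix.transpose_apply]
        push_cast
        rw [Finset.mul_sum]
        refine Finset.sum_congr rfl fun k _ => ?_
        rw [← hA k i, ← hA k j]; ring
      rw [hRtR] at key
      have h2 : ((((m:ℤ)^2 • (1 : Matrix (Fin 3) (Fin 3) ℤ)) i j : ℤ) : ℝ)
          = (m:ℝ)^2 * ((1 : Matrix (Fin 3) (Fin 3) ℝ) i j) := by
        by_cases h : i = j <;> simp [Matrix.one_apply, h]
      exact_mod_cast key.trans h2.symm
    have hAAy : Aᵀ.mulVec a = ((m:ℤ)^2) • y := by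
      rw [hadef, Matrix.mulVec_mulVec, hAtA, Matrix.smul_mulVec, Matrix.one_mulVec]
    -- no prime divides all entries of a
    have hnop : ∀ p : ℕ, p.Prime → ¬ (∀ i, (p:ℤ) ∣ a i) := by
      intro p pp hpa
      have hp' : Prime (p:ℤ) := Nat.prime_iff_prime_int.mp pp
      by_cases hp : p ∈ m.primeFactors
      · -- row I p contradiction
        have hd0 : (p:ℤ) ∣ ∑ j ∈ Finset.univ.erase (J p), A (I p) j * y j :=
          Finset.dvd_sum fun j hj =>
            ((hy2 p hp j (Finset.ne_of_mem_erase hj).symm).mul_left _)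
        have hsum : ∑ j ∈ Finset.univ.erase (J p), A (I p) j * y j
            + A (I p) (J p) * y (J p) = a (I p) := by
          rw [ha]; exact Finset.sum_erase_add _ _ (Finset.mem_univ _)
        have hd1 : (p:ℤ) ∣ A (I p) (J p) * y (J p) := by
          have heq : A (I p) (J p) * y (J p)
              = a (I p) - ∑ j ∈ Finset.univ.erase (J p), A (I p) j * y j := by
            linarith [hsum]
          rw [heq]
          exact dvd_sub (hpa (I p)) hd0
        rcases hp'.dvd_mul.mp hd1 with h | h
        · exact hIJ p hp h
        · exact hy3 p hp h
      · -- p not dividing m: use A^T A = m^2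
        have hpm : ¬ (p ∣ m) := fun hd => hp (Nat.mem_primeFactors.mpr ⟨pp, hd, hm0.ne'⟩)
        have h1 : (p:ℤ) ∣ ((m:ℤ)^2) * y 0 := by
          have : ((m:ℤ)^2) * y 0 = Aᵀ.mulVec a 0 := by
            rw [hAAy]; simp
          rw [this]
          simp only [Matrix.mulVec, dotProduct]
          exact Finset.dvd_sum fun k _ => Dvd.dvd.mul_left (hpa k) _
        rcases hp'.dvd_mul.mp h1 with h | h
        · have := Int.natCast_dvd_natCast.mp (hp'.dvd_of_dvd_pow (n := 2) (by exact_mod_cast h))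
          exact hpm this
        · exact hp ((hy1 p pp 0 h).1)
    -- a is not the zero vector
    have hy0 : ∀ j, 0 < y j := by
      intro j
      refine Finset.prod_pos fun p hp => ?_
      exact_mod_cast (Nat.prime_of_mem_primeFactors (Finset.mem_filter.mp hp).1).pos
    have ha0 : ¬ (∀ i, a i = 0) := by
      intro h0
      have : Aᵀ.mulVec a = 0 := by
        funext j
        simp only [Matrix.mulVec, dotProduct]
        simp [h0]
      rw [hAAy] at this
      have := congrFun this 0
      simp only [Pi.smul_apply, smul_eq_mul, Pi.zero_apply] at this
      have hm2 : ((m:ℤ)^2) ≠ 0 := by positivity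
      have := mul_eq_zero.mp this
      rcases this with h | h
      · exact hm2 h
      · exact (hy0 0).ne' h
    -- conclude gcd = 1
    refine ⟨a, ?_, ?_⟩
    · set g := Int.gcd (a 0) (Int.gcd (a 1) (a 2)) with hg
      have hgd : ∀ i, (g : ℤ) ∣ a i := by
        intro i
        fin_cases i
        · exact Int.gcd_dvd_left _ _
        · exact dvd_trans (Int.gcd_dvd_right _ _) (Int.gcd_dvd_left _ _)
        · exact dvd_trans (Int.gcd_dvd_right _ _) (Int.gcd_dvd_right _ _)
      by_contra hg1
      rcases Nat.eq_zero_or_pos g with h0 | hpos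
      · have h1 := Int.gcd_eq_zero_iff.mp h0
        have h2 := Int.gcd_eq_zero_iff.mp (Nat.cast_eq_zero.mp h1.2)
        refine ha0 fun i => ?_
        fin_cases i
        · exact h1.1
        · exact h2.1
        · exact h2.2
      · obtain ⟨p, pp, hpg⟩ := Nat.exists_prime_and_dvd (fun h => hg1 h)
        refine hnop p pp fun i => ?_
        exact dvd_trans (Int.natCast_dvd_natCast.mpr hpg) (hgd i)
    · refine ⟨(fun i => (y i : ℝ)), ?_, ?_⟩
      · intro k _
        exact ⟨y k, by simp⟩
      · funext i
        show R.mulVec (fun i => (y i : ℝ)) i = (a i : ℝ) / m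
        rw [eq_div_iff hm0']
        have hcast : (a i : ℝ) = ∑ j, (A i j : ℝ) * (y j : ℝ) := by
          rw [ha i]; push_cast; rfl
        rw [hcast]
        simp only [Matrix.mulVec, dotProduct, Finset.sum_mul]
        refine Finset.sum_congr rfl fun j _ => ?_
        rw [← hA i j]; ring
end
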